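/- arXiv:1903.11090 — 6 statements merged into one kernel-verified Lean document; each statement's English description precedes it below -/
import Mathlib

section
/- Let N ≥ 3, μ ∈ (0,1/4], q ∈ (1,2), and let β₀ > 0, ε₀ > 0, R₁ > 0. Set γ := (2−q)/(q−1). There exists a constant C* > 0 depending only on N, μ, q, ε₀ and R₁ such that the following holds: for every C₁ ≥ C*, every nonempty bounded open set Ω ⊂ ℝ^N contained in the ball B(0,R₁), the function v(x) := C₁·(|x| − β₀/4)^{−γ} satisfies Δv(x) + (μ/δ(x)²)·v(x) ≤ ‖∇v(x)‖^q at every point x ∈ Ω with |x| > β₀/4 and δ(x) ≥ ε₀, where δ(x) denotes the Euclidean distance from x to the complement of Ω. -/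
open MeasureTheory Metric Set

/-- The Laplacian of `u : ℝ^N → ℝ`, as the sum of the second partial derivatives
in the coordinate directions. -/
noncomputable def lap {N : ℕ} (u : EuclideanSpace ℝ (Fin N) → ℝ)
    (x : EuclideanSpace ℝ (Fin N)) : ℝ :=
  ∑ i : Fin N, fderiv ℝ (fun y => fderiv ℝ u y (EuclideanSpace.single i 1)) x
    (EuclideanSpace.single i 1)

section Aux

variable {E : Type*} [NormedAddCommGroup E] [InnerProductSpace ℝ E]

theorem aux_hasFDerivAt_norm {x : E} (hx : x ≠ 0) :
    HasFDerivAt (fun y : E => ‖y‖) (‖x‖⁻¹ • innerSL ℝ x) x := by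
  have h1 : HasFDerivAt (fun y : E => ‖y‖ ^ 2) (2 • innerSL ℝ x) x :=
    (hasStrictFDerivAt_norm_sq x).hasFDerivAt
  have hx2 : (0:ℝ) < ‖x‖ := norm_pos_iff.mpr hx
  have h2 : HasDerivAt Real.sqrt (1 / (2 * Real.sqrt (‖x‖ ^ 2))) (‖x‖ ^ 2) :=
    Real.hasDerivAt_sqrt (by positivity)
  have h3 := h2.comp_hasFDerivAt x h1
  simp only [Function.comp_def] at h3
  have he : (fun y : E => Real.sqrt (‖y‖ ^ 2)) = fun y : E => ‖y‖ := by
    funext y; rw [Real.sqrt_sq (norm_nonneg y)]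
  rw [he] at h3
  have hc : ((1 / (2 * Real.sqrt (‖x‖ ^ 2))) • (2 • innerSL ℝ x) : E →L[ℝ] ℝ)
      = ‖x‖⁻¹ • innerSL ℝ x := by
    ext y
    rw [Real.sqrt_sq (norm_nonneg x)]
    simp only [ContinuousLinearMap.smul_apply, ContinuousLinearMap.coe_smul',
      Pi.smul_apply, smul_eq_mul, two_smul, ContinuousLinearMap.add_apply]
    field_simp
    ring
  rwa [hc] at h3

theorem aux_radial_fderiv {g : ℝ → ℝ} {g' : ℝ} {x : E} (hx : x ≠ 0)
    (hg : HasDerivAt g g' ‖x‖) :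
    HasFDerivAt (fun y : E => g ‖y‖) ((g' * ‖x‖⁻¹) • innerSL ℝ x) x := by
  have h := hg.comp_hasFDerivAt x (aux_hasFDerivAt_norm hx)
  simp only [Function.comp_def] at h
  rwa [smul_smul] at h

theorem aux_deriv_shift_rpow (c a p : ℝ) {t : ℝ} (ht : t - a ≠ 0) :
    HasDerivAt (fun t : ℝ => c * (t - a) ^ p) (c * (p * (t - a) ^ (p - 1))) t := by
  have h1 : HasDerivAt (fun t : ℝ => t - a) 1 t := (hasDerivAt_id t).sub_const a
  have h2 := Real.hasDerivAt_rpow_const (x := t - a) (p := p) (Or.inl ht)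
  have h3 := (h2.comp t h1)
  simp only [Function.comp_def, mul_one] at h3
  exact h3.const_mul c

theorem aux_main_hasFDerivAt (C₁ a p : ℝ) {x : E} (hx : a < ‖x‖) (ha : 0 ≤ a) :
    HasFDerivAt (fun y : E => C₁ * (‖y‖ - a) ^ p)
      ((C₁ * (p * (‖x‖ - a) ^ (p - 1)) * ‖x‖⁻¹) • innerSL ℝ x) x := by
  have hr : (0:ℝ) < ‖x‖ := lt_of_le_of_lt ha hx
  exact aux_radial_fderiv (norm_pos_iff.mp hr)
    (aux_deriv_shift_rpow C₁ a p (by linarith))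

theorem aux_radial_lap {N : ℕ} (C₁ a p : ℝ) (ha : 0 ≤ a)
    (x : EuclideanSpace ℝ (Fin N)) (hx : a < ‖x‖) :
    lap (fun y => C₁ * (‖y‖ - a) ^ p) x
      = C₁ * p * (p - 1) * (‖x‖ - a) ^ (p - 2)
        + (N - 1) * (C₁ * p * (‖x‖ - a) ^ (p - 1) * ‖x‖⁻¹) := by
  have hr : (0:ℝ) < ‖x‖ := lt_of_le_of_lt ha hx
  have hx0 : x ≠ 0 := norm_pos_iff.mp hr
  set r := ‖x‖ with hrdef
  have hs : (0:ℝ) < r - a := by linarith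
  have hU : IsOpen {y : EuclideanSpace ℝ (Fin N) | a < ‖y‖} :=
    isOpen_lt continuous_const continuous_norm
  have hxU : x ∈ {y : EuclideanSpace ℝ (Fin N) | a < ‖y‖} := hx
  set c : EuclideanSpace ℝ (Fin N) → ℝ :=
    fun y => C₁ * (p * (‖y‖ - a) ^ (p - 1)) * ‖y‖⁻¹ with hcdef
  have hD : ∀ y ∈ {y : EuclideanSpace ℝ (Fin N) | a < ‖y‖},
      fderiv ℝ (fun y => C₁ * (‖y‖ - a) ^ p) y = c y • innerSL ℝ y := by
    intro y hy
    exact (aux_main_hasFDerivAt C₁ a p hy ha).fderiv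
  have hg2 : HasDerivAt (fun t : ℝ => C₁ * (p * (t - a) ^ (p - 1)) * t⁻¹)
      ((C₁ * ((p) * ((p-1) * (r - a) ^ (p - 2)))) * r⁻¹
        + (C₁ * (p * (r - a) ^ (p - 1))) * (-(r ^ 2)⁻¹)) r := by
    have h1 : HasDerivAt (fun t : ℝ => C₁ * (p * (t - a) ^ (p - 1)))
        (C₁ * ((p) * ((p-1) * (r - a) ^ (p - 2)))) r := by
      have := (aux_deriv_shift_rpow p a (p-1) (by linarith : r - a ≠ 0)).const_mul C₁
      have e : p - 1 - 1 = p - 2 := by ring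
      rw [e] at this
      exact this
    have h2 : HasDerivAt (fun t : ℝ => t⁻¹) (-(r ^ 2)⁻¹) r := hasDerivAt_inv hr.ne'
    exact h1.mul h2
  set d' : ℝ := ((C₁ * ((p) * ((p-1) * (r - a) ^ (p - 2)))) * r⁻¹
        + (C₁ * (p * (r - a) ^ (p - 1))) * (-(r ^ 2)⁻¹)) * r⁻¹ with hd'def
  have hc : HasFDerivAt c (d' • innerSL ℝ x) x := aux_radial_fderiv hx0 hg2
  have key : ∀ i : Fin N,
      fderiv ℝ (fun y => fderiv ℝ (fun y => C₁ * (‖y‖ - a) ^ p) y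
          (EuclideanSpace.single i 1)) x (EuclideanSpace.single i 1)
        = c x * 1 + (x i) * (d' * (x i)) := by
    intro i
    set e : EuclideanSpace ℝ (Fin N) := EuclideanSpace.single i 1 with hedef
    have heq : (fun y => fderiv ℝ (fun y => C₁ * (‖y‖ - a) ^ p) y e)
        =ᶠ[nhds x] (fun y => c y * (inner ℝ e y : ℝ)) := by
      filter_upwards [hU.mem_nhds hxU] with y hy
      rw [hD y hy]
      simp only [ContinuousLinearMap.smul_apply, innerSL_apply_apply, smul_eq_mul]
      rw [real_inner_comm]
    have hG : HasFDerivAt (fun y => c y * (inner ℝ e y : ℝ))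
        (c x • (innerSL ℝ e) + (inner ℝ e x : ℝ) • (d' • innerSL ℝ x)) x :=
      hc.mul ((innerSL ℝ e).hasFDerivAt)
    rw [heq.fderiv_eq, hG.fderiv]
    simp only [ContinuousLinearMap.add_apply, ContinuousLinearMap.smul_apply,
      innerSL_apply_apply, smul_eq_mul]
    rw [hedef]
    simp [EuclideanSpace.inner_single_left, EuclideanSpace.inner_single_right,
      EuclideanSpace.single_apply]
  unfold lap
  simp only [key]
  rw [Finset.sum_add_distrib, Finset.sum_const, Finset.card_univ, Fintype.card_fin]
  have hsum : ∑ i : Fin N, (x i) * (d' * (x i)) = d' * ‖x‖ ^ 2 := by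
    have h : ∑ i : Fin N, (x i) * (d' * (x i)) = d' * ∑ i, x i * x i := by
      rw [Finset.mul_sum]; congr 1; funext i; ring
    rw [h]
    congr 1
    rw [EuclideanSpace.norm_sq_eq]
    congr 1; funext i; rw [Real.norm_eq_abs, sq_abs, sq]
  rw [hsum, hd'def, hcdef]
  have hr2 : r ≠ 0 := hr.ne'
  simp only [nsmul_eq_mul]
  field_simp
  ring

end Aux

theorem aux_radial_grad {N : ℕ} (C₁ a p : ℝ) {x : EuclideanSpace ℝ (Fin N)}
    (hx : a < ‖x‖) (ha : 0 ≤ a) :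
    ‖gradient (fun y : EuclideanSpace ℝ (Fin N) => C₁ * (‖y‖ - a) ^ p) x‖
      = |C₁ * p| * (‖x‖ - a) ^ (p - 1) := by
  have hr : (0:ℝ) < ‖x‖ := lt_of_le_of_lt ha hx
  have hs : (0:ℝ) < ‖x‖ - a := by linarith
  have hf := (aux_main_hasFDerivAt C₁ a p hx ha).fderiv
  rw [gradient, LinearIsometryEquiv.norm_map, hf, norm_smul, innerSL_apply_norm]
  rw [Real.norm_eq_abs, abs_mul, abs_mul, abs_mul,
    abs_of_pos (Real.rpow_pos_of_pos hs _), abs_inv, abs_of_pos hr]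
  field_simp [abs_mul]
  ring_nf; rw [abs_mul, mul_comm]

/-- The radial supersolution of `-L_μ v + |∇v|^q = 0` from Step 1 of the proof of
Proposition E. -/
theorem stmt_1 (N : ℕ) (hN : 3 ≤ N) (μ q β₀ ε₀ R₁ : ℝ)
    (hμ : μ ∈ Set.Ioc (0:ℝ) (1/4)) (hq : q ∈ Set.Ioo (1:ℝ) 2)
    (hβ₀ : 0 < β₀) (hε₀ : 0 < ε₀) (hR₁ : 0 < R₁) :
    ∃ Cstar : ℝ, 0 < Cstar ∧
      ∀ C₁ ≥ Cstar,
        ∀ Ω : Set (EuclideanSpace ℝ (Fin N)), Ω.Nonempty → Bornology.IsBounded Ω →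
          IsOpen Ω → Ω ⊆ Metric.ball 0 R₁ →
          ∀ x ∈ Ω, β₀ / 4 < ‖x‖ → ε₀ ≤ infDist x Ωᶜ →
            lap (fun y => C₁ * (‖y‖ - β₀ / 4) ^ (-((2 - q) / (q - 1)))) x
              + (μ / (infDist x Ωᶜ) ^ 2) * (C₁ * (‖x‖ - β₀ / 4) ^ (-((2 - q) / (q - 1))))
              ≤ ‖gradient (fun y => C₁ * (‖y‖ - β₀ / 4) ^ (-((2 - q) / (q - 1)))) x‖ ^ q := by
  obtain ⟨hμ0, hμ1⟩ := hμ
  obtain ⟨hq1, hq2⟩ := hq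
  set γ : ℝ := (2 - q) / (q - 1) with hγdef
  have hq1' : (0:ℝ) < q - 1 := by linarith
  have hγpos : 0 < γ := div_pos (by linarith) hq1'
  set K : ℝ := γ * (γ + 1) + R₁ ^ 2 * (μ / ε₀ ^ 2) with hKdef
  have hKpos : 0 < K := by positivity
  have hγq : (0:ℝ) < γ ^ q := Real.rpow_pos_of_pos hγpos q
  refine ⟨max 1 ((K / γ ^ q) ^ (1 / (q - 1))), lt_of_lt_of_le one_pos (le_max_left _ _), ?_⟩
  intro C₁ hC₁ Ω hne hb hop hsub x hxΩ hxr hδ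
  have hC1 : (1:ℝ) ≤ C₁ := le_trans (le_max_left _ _) hC₁
  have hCpos : (0:ℝ) < C₁ := lt_of_lt_of_le one_pos hC1
  set a : ℝ := β₀ / 4 with hadef
  have ha : (0:ℝ) < a := by positivity
  set p : ℝ := -γ with hpdef
  set r : ℝ := ‖x‖ with hrdef
  have hr : a < r := hxr
  have hr0 : (0:ℝ) < r := lt_trans ha hr
  set s : ℝ := r - a with hsdef
  have hs : (0:ℝ) < s := by simp only [hsdef]; linarith
  have hrR : r < R₁ := by
    have := hsub hxΩ
    rwa [mem_ball_zero_iff] at this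
  have hsR : s < R₁ := by simp only [hsdef]; linarith
  set δ : ℝ := infDist x Ωᶜ with hδdef
  have hδ0 : (0:ℝ) < δ := lt_of_lt_of_le hε₀ hδ
  -- rewrite lap and gradient
  have hlap := aux_radial_lap (N := N) C₁ a p ha.le x hr
  have hgrad := aux_radial_grad (N := N) C₁ a p hr ha.le
  have habs : |C₁ * p| = C₁ * γ := by
    rw [abs_mul, abs_of_pos hCpos, hpdef, abs_neg, abs_of_pos hγpos]
  rw [hlap, hgrad, habs, ← hrdef, ← hsdef]
  -- RHS equals C₁^q * γ^q * s^(p-2)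
  have hpq : (p - 1) * q = p - 2 := by
    rw [hpdef, hγdef]; field_simp; ring
  have hRHS : (C₁ * γ * s ^ (p - 1)) ^ q = (C₁ ^ q * γ ^ q) * s ^ (p - 2) := by
    rw [Real.mul_rpow (by positivity) (Real.rpow_pos_of_pos hs _).le,
      Real.mul_rpow hCpos.le hγpos.le, ← Real.rpow_mul hs.le, hpq]
  rw [hRHS]
  -- the middle lap term is nonpositive
  have hmid : (↑N - 1 : ℝ) * (C₁ * p * s ^ (p - 1) * r⁻¹) ≤ 0 := by
    have hN1 : (0:ℝ) ≤ (N:ℝ) - 1 := by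
      have : (3:ℝ) ≤ (N:ℝ) := by exact_mod_cast hN
      linarith
    have hneg : C₁ * p * s ^ (p - 1) * r⁻¹ ≤ 0 := by
      have hpneg : p < 0 := by rw [hpdef]; linarith
      have h1 : (0:ℝ) < s ^ (p - 1) := Real.rpow_pos_of_pos hs _
      have h2 : (0:ℝ) < r⁻¹ := by positivity
      have e1 : C₁ * p ≤ 0 := mul_nonpos_of_nonneg_of_nonpos hCpos.le hpneg.le
      have e2 : C₁ * p * s ^ (p - 1) ≤ 0 := mul_nonpos_of_nonpos_of_nonneg e1 h1.le
      exact mul_nonpos_of_nonpos_of_nonneg e2 h2.le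
    exact mul_nonpos_of_nonneg_of_nonpos hN1 hneg
  -- bound the singular term
  have hsp : s ^ p = s ^ (p - 2) * s ^ 2 := by
    rw [← Real.rpow_two, ← Real.rpow_add hs]
    norm_num
  have hsing : μ / δ ^ 2 * (C₁ * s ^ p) ≤ C₁ * (R₁ ^ 2 * (μ / ε₀ ^ 2)) * s ^ (p - 2) := by
    rw [hsp]
    have h1 : μ / δ ^ 2 ≤ μ / ε₀ ^ 2 := by
      apply div_le_div_of_nonneg_left hμ0.le (by positivity)
      exact pow_le_pow_left₀ hε₀.le hδ 2
    have h2 : s ^ 2 ≤ R₁ ^ 2 := by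
      apply pow_le_pow_left₀ hs.le hsR.le
    have h3 : (0:ℝ) < s ^ (p - 2) := Real.rpow_pos_of_pos hs _
    calc μ / δ ^ 2 * (C₁ * (s ^ (p - 2) * s ^ 2))
        ≤ μ / ε₀ ^ 2 * (C₁ * (s ^ (p - 2) * R₁ ^ 2)) := by
          apply mul_le_mul h1 _ (by positivity) (by positivity)
          apply mul_le_mul_of_nonneg_left _ hCpos.le
          exact mul_le_mul_of_nonneg_left h2 h3.le
      _ = C₁ * (R₁ ^ 2 * (μ / ε₀ ^ 2)) * s ^ (p - 2) := by ring
  -- the main coefficient inequality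
  have hcoef : C₁ * K ≤ C₁ ^ q * γ ^ q := by
    have hCq : C₁ ^ q = C₁ * C₁ ^ (q - 1) := by
      nth_rewrite 2 [← Real.rpow_one C₁]
      rw [← Real.rpow_add hCpos]
      norm_num
    rw [hCq]
    have hKg : K / γ ^ q ≤ C₁ ^ (q - 1) := by
      have h1 : ((K / γ ^ q) ^ (1 / (q - 1))) ^ (q - 1) ≤ C₁ ^ (q - 1) := by
        apply Real.rpow_le_rpow (Real.rpow_nonneg (by positivity) _)
          (le_trans (le_max_right _ _) hC₁) (by linarith)
      rwa [← Real.rpow_mul (by positivity), one_div,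
        inv_mul_cancel₀ (by linarith : q - 1 ≠ 0), Real.rpow_one] at h1
    calc C₁ * K = C₁ * ((K / γ ^ q) * γ ^ q) := by
          rw [div_mul_cancel₀ _ hγq.ne']
      _ ≤ C₁ * (C₁ ^ (q - 1) * γ ^ q) := by
          apply mul_le_mul_of_nonneg_left _ hCpos.le
          exact mul_le_mul_of_nonneg_right hKg hγq.le
      _ = C₁ * C₁ ^ (q - 1) * γ ^ q := by ring
  -- put everything together
  have hpp : C₁ * p * (p - 1) = C₁ * (γ * (γ + 1)) := by rw [hpdef]; ring
  have hsp2 : (0:ℝ) < s ^ (p - 2) := Real.rpow_pos_of_pos hs _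
  calc C₁ * p * (p - 1) * s ^ (p - 2) + (↑N - 1) * (C₁ * p * s ^ (p - 1) * r⁻¹)
        + μ / δ ^ 2 * (C₁ * s ^ p)
      ≤ C₁ * (γ * (γ + 1)) * s ^ (p - 2) + 0
        + C₁ * (R₁ ^ 2 * (μ / ε₀ ^ 2)) * s ^ (p - 2) := by
        rw [hpp]
        exact add_le_add (add_le_add le_rfl hmid) hsing
    _ = (C₁ * K) * s ^ (p - 2) := by rw [hKdef]; ring
    _ ≤ (C₁ ^ q * γ ^ q) * s ^ (p - 2) :=
        mul_le_mul_of_nonneg_right hcoef hsp2.le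
end

section
/- Let N ≥ 3, μ ∈ (0,1/4], and let Ω ⊂ ℝ^N be a nonempty bounded open connected set; write δ(x) for the Euclidean distance from x to the complement of Ω. Let g : [0,∞) → [0,∞) be locally Lipschitz, nondecreasing, with g(0) = 0. Suppose u is twice continuously differentiable on Ω, u ≥ 0 on Ω, and Δu(x) + (μ/δ(x)²)·u(x) = g(‖∇u(x)‖) for all x ∈ Ω. If u(x₀) = 0 for some x₀ ∈ Ω, then u is identically zero on Ω. -/
open MeasureTheory Metric Set

set_option maxHeartbeats 1000000

section Aux
noncomputable section
variable {F : Type*} [NormedAddCommGroup F] [InnerProductSpace ℝ F]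
local notation "⟪" x ", " y "⟫" => @inner ℝ _ _ x y

/-- barrier core -/
def W (p : F) (α : ℝ) (x : F) : ℝ := Real.exp (-α * ⟪x - p, x - p⟫)

lemma W_pos (p : F) (α : ℝ) (x : F) : 0 < W p α x := Real.exp_pos _

lemma W_eq (p : F) (α : ℝ) (x : F) : W p α x = Real.exp (-α * ‖x - p‖^2) := by
  rw [W, real_inner_self_eq_norm_sq]

lemma hasFDerivAt_W (p : F) (α : ℝ) (x : F) :
    HasFDerivAt (W p α) ((-(2*α) * W p α x) • innerSL ℝ (x - p)) x := by
  have h1 : HasFDerivAt (fun y : F => y - p) (ContinuousLinearMap.id ℝ F) x :=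
    (hasFDerivAt_id x).sub_const p
  have h2 := (h1.inner ℝ h1).const_mul (-α)
  have h3 := h2.exp
  convert h3 using 1
  · rfl
  ext v
  simp [W, fderivInnerCLM, real_inner_comm (x - p) v, inner_sub_left]
  ring

lemma fderiv_W_apply (p : F) (α : ℝ) (x v : F) :
    fderiv ℝ (W p α) x v = (-(2*α) * W p α x) * ⟪x - p, v⟫ := by
  rw [(hasFDerivAt_W p α x).fderiv]; simp [inner_sub_left]

lemma hasFDerivAt_W' (p : F) (α : ℝ) (e x : F) :
    HasFDerivAt (fun y => fderiv ℝ (W p α) y e)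
      (((-(2*α) * W p α x) • innerSL ℝ e) + ⟪x - p, e⟫ •
        ((-(2*α)) • ((-(2*α) * W p α x) • innerSL ℝ (x - p)))) x := by
  have h1 : HasFDerivAt (fun y : F => y - p) (ContinuousLinearMap.id ℝ F) x :=
    (hasFDerivAt_id x).sub_const p
  have hB : HasFDerivAt (fun y : F => (⟪e, y - p⟫ : ℝ)) (innerSL ℝ e) x := by
    have h2 := ((innerSL ℝ e).hasFDerivAt (x := x - p)).comp x h1
    have h3 : (⇑(innerSL ℝ e) ∘ fun y : F => y - p) = fun y : F => (⟪e, y - p⟫ : ℝ) := rfl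
    rw [h3] at h2
    simpa using h2
  have hA : HasFDerivAt (fun y : F => -(2*α) * W p α y)
      ((-(2*α)) • ((-(2*α) * W p α x) • innerSL ℝ (x - p))) x :=
    (hasFDerivAt_W p α x).const_mul _
  have hAB := hA.mul hB
  refine HasFDerivAt.congr_of_eventuallyEq ?_ (by
    filter_upwards with y
    rw [fderiv_W_apply, real_inner_comm] : (fun y => fderiv ℝ (W p α) y e)
      =ᶠ[nhds x] (fun y : F => (-(2*α) * W p α y) * ⟪e, y - p⟫))
  rw [show (⟪x - p, e⟫ : ℝ) = ⟪e, x - p⟫ from real_inner_comm _ _]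
  exact hAB

lemma differentiableAt_W' (p : F) (α : ℝ) (e x : F) :
    DifferentiableAt ℝ (fun y => fderiv ℝ (W p α) y e) x :=
  (hasFDerivAt_W' p α e x).differentiableAt

lemma fderiv_W'_apply (p : F) (α : ℝ) (e x : F) :
    fderiv ℝ (fun y => fderiv ℝ (W p α) y e) x e
      = W p α x * (4*α^2*⟪x-p,e⟫^2 - 2*α*⟪e,e⟫) := by
  rw [(hasFDerivAt_W' p α e x).fderiv]
  simp [inner_sub_left]
  ring

lemma lap_W {N : ℕ} (p : EuclideanSpace ℝ (Fin N)) (α : ℝ) (x : EuclideanSpace ℝ (Fin N)) :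
    lap (W p α) x = W p α x * (4*α^2*‖x-p‖^2 - 2*α*N) := by
  unfold lap
  have h1 : ∀ i : Fin N, fderiv ℝ (fun y => fderiv ℝ (W p α) y (EuclideanSpace.single i 1)) x
      (EuclideanSpace.single i 1)
      = W p α x * (4*α^2*((x-p) i)^2 - 2*α) := by
    intro i
    rw [fderiv_W'_apply]
    have : (⟪x - p, EuclideanSpace.single i (1:ℝ)⟫ : ℝ) = (x - p) i := by
      rw [EuclideanSpace.inner_single_right]; simp
    rw [this]
    have : (⟪EuclideanSpace.single i (1:ℝ), EuclideanSpace.single i (1:ℝ)⟫ : ℝ) = 1 := by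
      rw [EuclideanSpace.inner_single_left]; simp [EuclideanSpace.single_apply]
    rw [this]
    ring
  rw [Finset.sum_congr rfl (fun i _ => h1 i)]
  have h2 : ∑ i : Fin N, ((x - p) i)^2 = ‖x - p‖^2 := by
    rw [← real_inner_self_eq_norm_sq, PiLp.inner_apply]
    simp [sq, RCLike.inner_apply]
  rw [← h2]
  simp [mul_sub, Finset.sum_sub_distrib, Finset.mul_sum, Finset.sum_const, Finset.card_univ]
  ring

lemma deriv2_nonpos_1d {φ : ℝ → ℝ} {c : ℝ}
    (hφ : ∀ᶠ t in nhds (0:ℝ), DifferentiableAt ℝ φ t)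
    (hd : HasDerivAt (fun t => deriv φ t) c 0) (hmax : IsLocalMax φ 0) : c ≤ 0 := by
  by_contra hc
  push_neg at hc
  have h0 : deriv φ 0 = 0 := hmax.deriv_eq_zero
  have hev : ∀ᶠ t in nhds (0:ℝ), ‖deriv φ t - deriv φ 0 - (t - 0) * c‖ ≤ (c/2) * ‖t - 0‖ := by
    have := hd.isLittleO.def (by linarith : (0:ℝ) < c/2)
    simpa [Real.norm_eq_abs] using this
  obtain ⟨δ, hδpos, hδ⟩ := Metric.eventually_nhds_iff.mp (hev.and (hφ.and (hmax : ∀ᶠ t in nhds (0:ℝ), φ t ≤ φ 0)))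
  have hderivpos : ∀ t ∈ Set.Ioo (0:ℝ) δ, 0 < deriv φ t := by
    intro t ht
    have h := hδ (by rw [Real.dist_eq, sub_zero, abs_of_pos ht.1]; linarith [ht.2] : dist t 0 < δ)
    have h1 := h.1
    rw [h0] at h1
    simp only [sub_zero, Real.norm_eq_abs] at h1
    have := abs_le.mp h1
    nlinarith [ht.1, this.1, abs_of_pos ht.1]
  have hmono : StrictMonoOn φ (Set.Icc 0 (δ/2)) := by
    apply strictMonoOn_of_deriv_pos (convex_Icc _ _)
    · apply ContinuousOn.mono (s := Set.Ioo (-δ) δ) ?_ ?_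
      · intro t ht
        exact ((hδ (by rw [Real.dist_eq, sub_zero, abs_lt]; exact ⟨ht.1, ht.2⟩ : dist t 0 < δ)).2.1).continuousAt.continuousWithinAt
      · intro t ht; constructor <;> [linarith [ht.1]; linarith [ht.2]]
    · intro t ht
      rw [interior_Icc] at ht
      exact hderivpos t ⟨ht.1, by linarith [ht.2]⟩
  have hlt : φ 0 < φ (δ/2) := hmono (by constructor <;> linarith) (by constructor <;> linarith) (by linarith)
  have := (hδ (by rw [Real.dist_eq, sub_zero, abs_of_pos (by linarith)]; linarith : dist (δ/2) 0 < δ)).2.2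
  linarith

lemma second_deriv_test {f : F → ℝ} {x e : F}
    (hd : ∀ᶠ y in nhds x, DifferentiableAt ℝ f y)
    (hd2 : DifferentiableAt ℝ (fun y => fderiv ℝ f y e) x)
    (hmax : IsLocalMax f x) :
    fderiv ℝ (fun y => fderiv ℝ f y e) x e ≤ 0 := by
  set c := fderiv ℝ (fun y => fderiv ℝ f y e) x e with hc
  set ℓ : ℝ → F := fun t => x + t • e with hℓdef
  have hℓ0 : ℓ 0 = x := by simp [hℓdef]
  have hℓd : ∀ t : ℝ, HasDerivAt ℓ e t := by
    intro t
    have := ((hasDerivAt_id t).smul_const e).const_add x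
    rw [one_smul] at this
    exact this
  have hℓc : Continuous ℓ := by continuity
  have hten : Filter.Tendsto ℓ (nhds 0) (nhds x) := by
    rw [← hℓ0]; exact hℓc.continuousAt
  set φ : ℝ → ℝ := fun t => f (ℓ t) with hφdef
  have hφd : ∀ᶠ t in nhds (0:ℝ), HasDerivAt φ (fderiv ℝ f (ℓ t) e) t := by
    filter_upwards [hten.eventually hd] with t ht
    exact ht.hasFDerivAt.comp_hasDerivAt t (hℓd t)
  have hφdiff : ∀ᶠ t in nhds (0:ℝ), DifferentiableAt ℝ φ t := by
    filter_upwards [hφd] with t ht using ht.differentiableAt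
  have hderiv_eq : ∀ᶠ t in nhds (0:ℝ), deriv φ t = fderiv ℝ f (ℓ t) e := by
    filter_upwards [hφd] with t ht using ht.deriv
  have hχ : HasDerivAt (fun t => fderiv ℝ f (ℓ t) e) c 0 := by
    have h := (hℓ0 ▸ hd2.hasFDerivAt).comp_hasDerivAt 0 (hℓd 0)
    rw [hℓ0] at h
    exact h
  have hdd : HasDerivAt (fun t => deriv φ t) c 0 :=
    hχ.congr_of_eventuallyEq hderiv_eq
  have hφmax : IsLocalMax φ 0 := by
    have := hten.eventually (hmax : ∀ᶠ y in nhds x, f y ≤ f x)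
    unfold IsLocalMax IsMaxFilter
    simpa [hφdef, hℓ0] using this
  exact deriv2_nonpos_1d hφdiff hdd hφmax

lemma lap_nonpos_of_isLocalMax {N : ℕ} {f : EuclideanSpace ℝ (Fin N) → ℝ}
    {x : EuclideanSpace ℝ (Fin N)}
    (hd : ∀ᶠ y in nhds x, DifferentiableAt ℝ f y)
    (hd2 : ∀ e, DifferentiableAt ℝ (fun y => fderiv ℝ f y e) x)
    (hmax : IsLocalMax f x) : lap f x ≤ 0 := by
  apply Finset.sum_nonpos
  intro i _
  exact second_deriv_test hd (hd2 _) hmax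

lemma g_linear_bound (g : ℝ → ℝ)
    (hglip : ∀ t ∈ Set.Ici (0:ℝ), ∃ K : NNReal, ∃ s ∈ nhdsWithin t (Set.Ici (0:ℝ)),
      LipschitzOnWith K g s)
    (hgmono : MonotoneOn g (Set.Ici (0:ℝ)))
    (hgnn : ∀ t ∈ Set.Ici (0:ℝ), 0 ≤ g t)
    (hg0 : g 0 = 0) (M : ℝ) (hM : 0 ≤ M) :
    ∃ L : ℝ, 0 ≤ L ∧ ∀ t ∈ Set.Icc (0:ℝ) M, g t ≤ L * t := by
  obtain ⟨K, s, hs, hlip⟩ := hglip 0 (Set.self_mem_Ici)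
  rw [mem_nhdsWithin_iff] at hs
  obtain ⟨ε, hεpos, hεs⟩ := hs
  set e := ε/2 with he
  have hepos : 0 < e := by positivity
  have hesub : Set.Icc (0:ℝ) e ⊆ s := by
    intro t ht
    apply hεs
    refine ⟨?_, ht.1⟩
    rw [mem_ball, Real.dist_eq, sub_zero, abs_of_nonneg ht.1]
    linarith [ht.2]
  have hsmall : ∀ t ∈ Set.Icc (0:ℝ) e, g t ≤ K * t := by
    intro t ht
    have h0s : (0:ℝ) ∈ s := hesub ⟨le_refl 0, le_of_lt hepos⟩
    have := hlip.dist_le_mul t (hesub ht) 0 h0s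
    rw [hg0, Real.dist_eq, Real.dist_eq, sub_zero, sub_zero, abs_of_nonneg ht.1] at this
    calc g t ≤ |g t| := le_abs_self _
    _ ≤ K * t := this
  refine ⟨K + g M / e, ?_, ?_⟩
  · have : (0:ℝ) ≤ g M / e := div_nonneg (hgnn M hM) (le_of_lt hepos)
    positivity
  · intro t ht
    by_cases hte : t ≤ e
    · calc g t ≤ K * t := hsmall t ⟨ht.1, hte⟩
      _ ≤ (K + g M / e) * t := by
          have : (0:ℝ) ≤ g M / e := div_nonneg (hgnn M hM) (le_of_lt hepos)
          nlinarith [ht.1]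
    · push_neg at hte
      have h1 : g t ≤ g M := hgmono ht.1 hM ht.2
      have h2 : g M = (g M / e) * e := by field_simp
      have h3 : (g M / e) * e ≤ (g M / e) * t := by
        apply mul_le_mul_of_nonneg_left (le_of_lt hte)
        exact div_nonneg (hgnn M hM) (le_of_lt hepos)
      have h4 : (0:ℝ) ≤ (K:ℝ) * t := mul_nonneg K.coe_nonneg ht.1
      calc g t ≤ (g M / e) * t := by linarith
      _ ≤ (K + g M / e) * t := by nlinarith [ht.1]

lemma W_differentiable (p : F) (α : ℝ) : Differentiable ℝ (W p α) :=
  fun x => (hasFDerivAt_W p α x).differentiableAt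

lemma W_continuous (p : F) (α : ℝ) : Continuous (W p α) :=
  (W_differentiable p α).continuous

lemma norm_fderiv_W (p : F) {α : ℝ} (hα : 0 ≤ α) (x : F) :
    ‖fderiv ℝ (W p α) x‖ = 2*α*W p α x*‖x-p‖ := by
  rw [(hasFDerivAt_W p α x).fderiv, norm_smul, innerSL_apply_norm]
  rw [Real.norm_eq_abs, abs_of_nonpos (by nlinarith [W_pos p α x] : -(2*α) * W p α x ≤ 0)]
  ring

lemma hopf_contradiction {N : ℕ} (hN1 : 0 < N) {Ω : Set (EuclideanSpace ℝ (Fin N))}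
    (hop : IsOpen Ω) {u : EuclideanSpace ℝ (Fin N) → ℝ}
    (hu : ContDiffOn ℝ 2 u Ω) (hunn : ∀ x ∈ Ω, 0 ≤ u x)
    {L : ℝ} (hL : 0 ≤ L)
    {p y : EuclideanSpace ℝ (Fin N)} {R : ℝ} (hR : 0 < R)
    (hball : closedBall p R ⊆ Ω)
    (hpos : ∀ x ∈ ball p R, 0 < u x)
    (hy : dist y p = R) (huy : u y = 0)
    (hsub : ∀ x ∈ closedBall p R, lap u x ≤ L * ‖fderiv ℝ u x‖) : False := by
  haveI : Nonempty (Fin N) := ⟨⟨0, hN1⟩⟩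
  set α : ℝ := (2*(N + L*R) + 1)/R^2 with hαdef
  have hα : 0 < α := by positivity
  -- strict subsolution property of the barrier on the annulus
  have hbarrier : ∀ x : EuclideanSpace ℝ (Fin N), R/2 ≤ dist x p → dist x p ≤ R →
      L * (2*α*W p α x*‖x-p‖) < lap (W p α) x := by
    intro x h1 h2
    rw [lap_W]
    have hxp : ‖x - p‖ = dist x p := by rw [dist_eq_norm]
    have hWp := W_pos p α x
    have hαR : α * R^2 = 2*(N + L*R) + 1 := by
      rw [hαdef]; field_simp
    have k1 : R^2/4 ≤ ‖x-p‖^2 := by nlinarith [hR]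
    have hstep : 2*α*‖x-p‖^2 - N - L*‖x-p‖ ≥ 1/2 := by
      have k2 : α*(R^2/4) ≥ (2*(N + L*R) + 1)/4 := by nlinarith
      have k3 : L*‖x-p‖ ≤ L*R := by nlinarith
      nlinarith [mul_le_mul_of_nonneg_left k1 (le_of_lt hα)]
    nlinarith [mul_pos hα hWp, mul_pos (mul_pos hα hα) hWp,
      mul_le_mul_of_nonneg_left hstep (le_of_lt (mul_pos hα hWp))]
  -- the minimum of u on the inner sphere
  have hspne : (sphere p (R/2)).Nonempty := NormedSpace.sphere_nonempty.mpr (by positivity)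
  have hsub_sph : sphere p (R/2) ⊆ ball p R := fun x hx => by
    rw [mem_sphere] at hx; rw [mem_ball, hx]; linarith
  have hucont : ContinuousOn u Ω := hu.continuousOn
  obtain ⟨xm, hxm_mem, hxm⟩ := (isCompact_sphere p (R/2)).exists_isMinOn hspne
    (hucont.mono (fun x hx => hball (ball_subset_closedBall (hsub_sph hx))))
  set m : ℝ := u xm with hmdef
  have hm : 0 < m := hpos xm (hsub_sph hxm_mem)
  set denom : ℝ := Real.exp (-α*(R/2)^2) - Real.exp (-α*R^2) with hdenomdef
  have hdenom : 0 < denom := by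
    rw [hdenomdef, sub_pos]
    apply Real.exp_lt_exp.mpr
    nlinarith [mul_pos hα (mul_pos hR hR)]
  set ε : ℝ := m / denom with hεdef
  have hε : 0 < ε := by positivity
  set κ : ℝ := ε * Real.exp (-α*R^2) with hκdef
  set h : EuclideanSpace ℝ (Fin N) → ℝ := fun x => ε * W p α x - u x with hhdef
  set K : Set (EuclideanSpace ℝ (Fin N)) := closedBall p R \ ball p (R/2) with hKdef
  have hKsub : K ⊆ Ω := fun x hx => hball hx.1
  have hKcomp : IsCompact K := (isCompact_closedBall p R).diff isOpen_ball
  have hKne : K.Nonempty :=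
    ⟨y, ⟨mem_closedBall.mpr (le_of_eq hy), fun hc => by rw [mem_ball, hy] at hc; linarith⟩⟩
  have hhcont : ContinuousOn h K :=
    ((W_continuous p α).continuousOn.const_smul ε).sub (hucont.mono hKsub)
  obtain ⟨xbar, hxbar_mem, hxbar⟩ := hKcomp.exists_isMaxOn hKne hhcont
  -- the comparison bound
  have hWouter : ∀ x : EuclideanSpace ℝ (Fin N), dist x p = R → W p α x = Real.exp (-α*R^2) := by
    intro x hx
    rw [W_eq]
    rw [← dist_eq_norm] at *
    rw [hx]
  have hxbarΩ : xbar ∈ Ω := hKsub hxbar_mem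
  have hud : ∀ z ∈ Ω, DifferentiableAt ℝ u z := fun z hz =>
    (hu.differentiableOn (by norm_num)).differentiableAt (hop.mem_nhds hz)
  have hF : ContDiffOn ℝ 1 (fderiv ℝ u) Ω := hu.fderiv_of_isOpen hop (by norm_num)
  have hFd : ∀ z ∈ Ω, DifferentiableAt ℝ (fderiv ℝ u) z := fun z hz =>
    (hF.differentiableOn (by norm_num)).differentiableAt (hop.mem_nhds hz)
  have hFed : ∀ (e : EuclideanSpace ℝ (Fin N)), ∀ z ∈ Ω,
      DifferentiableAt ℝ (fun y => fderiv ℝ u y e) z := fun e z hz =>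
    ((ContinuousLinearMap.apply ℝ ℝ e).differentiable.differentiableAt).comp z (hFd z hz)
  have hbound : ∀ x ∈ K, h x ≤ κ := by
    intro x hx
    suffices hs : h xbar ≤ κ by exact le_trans (hxbar hx) hs
    by_contra hgt
    push_neg at hgt
    have hx1 : dist xbar p ≤ R := mem_closedBall.mp hxbar_mem.1
    have hx2 : R/2 ≤ dist xbar p := not_lt.mp (fun hc => hxbar_mem.2 (mem_ball.mpr hc))
    have hne1 : dist xbar p ≠ R := by
      intro hc
      have hb : h xbar ≤ κ := by
        have := hunn xbar hxbarΩ
        rw [hhdef]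
        simp only
        rw [hWouter xbar hc, hκdef]
        linarith
      linarith
    have hne2 : dist xbar p ≠ R/2 := by
      intro hc
      have hWin : W p α xbar = Real.exp (-α*(R/2)^2) := by
        rw [W_eq, ← dist_eq_norm, hc]
      have hum : m ≤ u xbar := hxm (mem_sphere.mpr hc)
      have hmd : ε * denom = m := by
        rw [hεdef]; field_simp
      have hb : h xbar ≤ κ := by
        rw [hhdef]
        simp only
        rw [hWin, hκdef]
        have : ε * Real.exp (-α*(R/2)^2) = ε * denom + ε * Real.exp (-α*R^2) := by
          rw [hdenomdef]; ring
        rw [this, hmd]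
        linarith
      linarith
    have hx1' : dist xbar p < R := lt_of_le_of_ne hx1 hne1
    have hx2' : R/2 < dist xbar p := lt_of_le_of_ne hx2 (Ne.symm hne2)
    -- xbar is an interior local max
    have hOopen : IsOpen {x : EuclideanSpace ℝ (Fin N) | R/2 < dist x p ∧ dist x p < R} :=
      (isOpen_lt continuous_const (continuous_id.dist continuous_const)).inter
        (isOpen_lt (continuous_id.dist continuous_const) continuous_const)
    have hKnhds : K ∈ nhds xbar := by
      rw [_root_.mem_nhds_iff]
      refine ⟨_, ?_, hOopen, ⟨hx2', hx1'⟩⟩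
      intro z hz
      exact ⟨mem_closedBall.mpr (le_of_lt hz.2), fun hc => by
        rw [mem_ball] at hc; linarith [hz.1]⟩
    have hlocmax : IsLocalMax h xbar := hxbar.isLocalMax hKnhds
    have hhd : ∀ᶠ z in nhds xbar, DifferentiableAt ℝ h z := by
      filter_upwards [hop.mem_nhds hxbarΩ] with z hz
      exact ((W_differentiable p α z).const_mul ε).sub (hud z hz)
    -- gradient of h vanishes at xbar
    have hfh : fderiv ℝ h xbar = ε • fderiv ℝ (W p α) xbar - fderiv ℝ u xbar := by
      rw [hhdef]
      rw [fderiv_fun_sub ((W_differentiable p α xbar).const_mul ε) (hud xbar hxbarΩ),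
        fderiv_const_mul (W_differentiable p α xbar) ε]
    have hfh0 : fderiv ℝ h xbar = 0 := hlocmax.fderiv_eq_zero
    have h00 : ε • fderiv ℝ (W p α) xbar - fderiv ℝ u xbar = 0 := by rw [← hfh, hfh0]
    have hfu : fderiv ℝ u xbar = ε • fderiv ℝ (W p α) xbar := (sub_eq_zero.mp h00).symm
    have hgradnorm : ‖fderiv ℝ u xbar‖ = ε * (2*α*W p α xbar*‖xbar-p‖) := by
      rw [hfu, norm_smul, norm_fderiv_W p (le_of_lt hα), Real.norm_eq_abs, abs_of_pos hε]
    -- eventual expression of directional derivatives of h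
    have hev_e : ∀ (e : EuclideanSpace ℝ (Fin N)),
        (fun y => fderiv ℝ h y e) =ᶠ[nhds xbar]
          (fun y => ε * fderiv ℝ (W p α) y e - fderiv ℝ u y e) := by
      intro e
      filter_upwards [hop.mem_nhds hxbarΩ] with z hz
      rw [hhdef]
      rw [fderiv_fun_sub ((W_differentiable p α z).const_mul ε) (hud z hz),
        fderiv_const_mul (W_differentiable p α z) ε]
      simp
    have hd2 : ∀ (e : EuclideanSpace ℝ (Fin N)),
        DifferentiableAt ℝ (fun y => fderiv ℝ h y e) xbar := by
      intro e
      rw [(hev_e e).differentiableAt_iff]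
      exact ((differentiableAt_W' p α e xbar).const_mul ε).sub (hFed e xbar hxbarΩ)
    have hlapnp : lap h xbar ≤ 0 := lap_nonpos_of_isLocalMax hhd hd2 hlocmax
    have hlap_split : lap h xbar = ε * lap (W p α) xbar - lap u xbar := by
      unfold lap
      have hterm : ∀ i : Fin N,
          fderiv ℝ (fun y => fderiv ℝ h y (EuclideanSpace.single i 1)) xbar
            (EuclideanSpace.single i 1)
          = ε * fderiv ℝ (fun y => fderiv ℝ (W p α) y (EuclideanSpace.single i 1)) xbar
              (EuclideanSpace.single i 1)
            - fderiv ℝ (fun y => fderiv ℝ u y (EuclideanSpace.single i 1)) xbar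
              (EuclideanSpace.single i 1) := by
        intro i
        rw [Filter.EventuallyEq.fderiv_eq (hev_e _)]
        rw [fderiv_fun_sub ((differentiableAt_W' p α _ xbar).const_mul ε) (hFed _ xbar hxbarΩ),
          fderiv_const_mul (differentiableAt_W' p α _ xbar) ε]
        simp
      rw [Finset.sum_congr rfl (fun i _ => hterm i), Finset.sum_sub_distrib, Finset.mul_sum]
    have hlapu : lap u xbar ≤ L * ‖fderiv ℝ u xbar‖ := hsub xbar hxbar_mem.1
    have hbar := hbarrier xbar hx2 hx1
    rw [hgradnorm] at hlapu
    rw [hlap_split] at hlapnp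
    nlinarith [hε, hbar, hlapu]
  -- lower bound for u on the annulus
  have hlower : ∀ x ∈ K, ε * (W p α x - Real.exp (-α*R^2)) ≤ u x := by
    intro x hx
    have hb := hbound x hx
    rw [hhdef] at hb
    simp only at hb
    rw [hκdef] at hb
    linarith
  -- the inward unit direction at y
  set n' : EuclideanSpace ℝ (Fin N) := (R⁻¹ : ℝ) • (p - y) with hn'def
  have hpy : ‖p - y‖ = R := by rw [← dist_eq_norm, dist_comm]; exact hy
  have hn'norm : ‖n'‖ = 1 := by
    rw [hn'def, norm_smul, hpy, Real.norm_eq_abs, abs_of_pos (by positivity)]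
    field_simp
  have hxs : ∀ s : ℝ, 0 ≤ s → s ≤ R/2 → dist (y + s • n') p = R - s := by
    intro s hs0 hs1
    have hrw : y + s • n' - p = (1 - s/R) • (y - p) := by
      rw [hn'def, smul_smul, div_eq_mul_inv]
      module
    rw [dist_eq_norm, hrw, norm_smul, Real.norm_eq_abs,
      abs_of_nonneg (by rw [sub_nonneg]; rw [div_le_one hR]; linarith), ← dist_eq_norm, hy]
    field_simp
  set c : ℝ := α*R*Real.exp (-α*R^2) with hcdef
  have hc : 0 < c := by positivity
  -- exponential lower bound along the radius
  have hexp_lb : ∀ s ∈ Set.Icc (0:ℝ) (R/2),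
      c*s + Real.exp (-α*R^2) ≤ Real.exp (-α*(R-s)^2) := by
    intro s hs
    set G : ℝ → ℝ := fun s => Real.exp (-α*(R-s)^2) - c*s with hGdef
    have hG' : ∀ t : ℝ, HasDerivAt G (2*α*(R-t)*Real.exp (-α*(R-t)^2) - c) t := by
      intro t
      have h1 : HasDerivAt (fun s : ℝ => R - s) (-1) t := (hasDerivAt_id t).const_sub R
      have h2 := h1.pow 2
      have h3 := h2.const_mul (-α)
      have h4 : HasDerivAt (fun s : ℝ => -α*(R-s)^2) (2*α*(R-t)) t := by
        exact h3.congr_deriv (by ring)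
      have h5 := h4.exp
      have h6 : HasDerivAt (fun s : ℝ => c*s) c t := by
        simpa using (hasDerivAt_id t).const_mul c
      have h7 := h5.sub h6
      exact h7.congr_deriv (by ring)
    have hGmono : MonotoneOn G (Set.Icc (0:ℝ) (R/2)) := by
      apply monotoneOn_of_deriv_nonneg (convex_Icc _ _)
      · exact (fun t _ => (hG' t).differentiableAt.continuousAt.continuousWithinAt)
      · exact (fun t _ => (hG' t).differentiableAt.differentiableWithinAt)
      · intro t ht
        rw [interior_Icc] at ht
        rw [(hG' t).deriv]
        have e1 : Real.exp (-α*R^2) ≤ Real.exp (-α*(R-t)^2) := by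
          apply Real.exp_le_exp.mpr
          have : 0 ≤ α*(t*(2*R-t)) :=
            mul_nonneg (le_of_lt hα) (mul_nonneg ht.1.le (by linarith [ht.2] : (0:ℝ) ≤ 2*R - t))
          nlinarith
        have e2 : α*R ≤ 2*α*(R-t) := by nlinarith [ht.2, hα, hR]
        have e3 : α*R*Real.exp (-α*R^2) ≤ 2*α*(R-t)*Real.exp (-α*(R-t)^2) := by
          apply mul_le_mul e2 e1 (Real.exp_pos _).le
          nlinarith [hα, hR, ht.2]
        rw [hcdef]
        linarith
    have := hGmono (Set.left_mem_Icc.mpr (by linarith)) hs hs.1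
    rw [hGdef] at this
    simp only at this
    simp at this
    ring_nf at this ⊢
    linarith [this]
  -- u is bounded below linearly along the inward radius
  have hus : ∀ s : ℝ, 0 < s → s ≤ R/2 → ε*c*s ≤ u (y + s • n') := by
    intro s hs0 hs1
    have hdist := hxs s (le_of_lt hs0) hs1
    have hmemK : (y + s • n') ∈ K := by
      constructor
      · rw [mem_closedBall, hdist]; linarith
      · rw [mem_ball, hdist]; intro hcon; linarith
    have hW : W p α (y + s • n') = Real.exp (-α*(R-s)^2) := by
      rw [W_eq, ← dist_eq_norm, hdist]
    have := hlower _ hmemK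
    rw [hW] at this
    have h2 := hexp_lb s ⟨le_of_lt hs0, hs1⟩
    nlinarith [hε]
  -- but the derivative of u at y vanishes
  have hyΩ : y ∈ Ω := hball (mem_closedBall.mpr (le_of_eq hy))
  have hmin : IsLocalMin u y := by
    unfold IsLocalMin IsMinFilter
    filter_upwards [hop.mem_nhds hyΩ] with z hz
    rw [huy]
    exact hunn z hz
  have hfy : fderiv ℝ u y = 0 := hmin.fderiv_eq_zero
  have hℓd : ∀ t : ℝ, HasDerivAt (fun s : ℝ => y + s • n') n' t := by
    intro t
    simpa using ((hasDerivAt_id t).smul_const n').const_add y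
  have hder : HasDerivAt (fun s : ℝ => u (y + s • n')) 0 0 := by
    have hu0 : HasFDerivAt u (0 : EuclideanSpace ℝ (Fin N) →L[ℝ] ℝ) y := by
      have := (hud y hyΩ).hasFDerivAt
      rwa [hfy] at this
    have h0 : y + (0:ℝ) • n' = y := by simp
    have := (h0.symm ▸ hu0).comp_hasDerivAt 0 (hℓd 0)
    exact this
  have hslope := hasDerivAt_iff_tendsto_slope.mp hder
  have h1 : Filter.Tendsto (slope (fun s : ℝ => u (y + s • n')) 0) (nhdsWithin 0 (Set.Ioi 0)) (nhds 0) :=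
    hslope.mono_left (nhdsWithin_mono 0 (fun s hs => ne_of_gt hs))
  have h2 : ∀ᶠ s in nhdsWithin (0:ℝ) (Set.Ioi 0),
      slope (fun s : ℝ => u (y + s • n')) 0 s < ε*c :=
    h1.eventually (Iio_mem_nhds (by positivity))
  have h3 : ∀ᶠ s in nhdsWithin (0:ℝ) (Set.Ioi 0), s < R/2 :=
    eventually_nhdsWithin_of_eventually_nhds (Iio_mem_nhds (by positivity))
  have h4 : ∀ᶠ s in nhdsWithin (0:ℝ) (Set.Ioi 0), s ∈ Set.Ioi (0:ℝ) :=
    self_mem_nhdsWithin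
  obtain ⟨s, hs2, hs3, hs4⟩ := (h2.and (h3.and h4)).exists
  have hs0 : (0:ℝ) < s := hs4
  have hsl : slope (fun s : ℝ => u (y + s • n')) 0 s = u (y + s • n') / s := by
    rw [slope_def_field]
    simp [huy]
  rw [hsl] at hs2
  have := hus s hs0 (le_of_lt hs3)
  have hlt : u (y + s • n') < ε*c*s := by
    calc u (y + s • n') = (u (y + s • n') / s) * s := by field_simp
    _ < ε*c*s := by apply mul_lt_mul_of_pos_right hs2 hs0
  linarith

lemma norm_gradient_eq [CompleteSpace F] (f : F → ℝ) (x : F) :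
    ‖gradient f x‖ = ‖fderiv ℝ f x‖ := by
  rw [gradient]
  exact LinearIsometryEquiv.norm_map _ _

end
end Aux

/-- Strong positivity (Lemma 4.4): a nonnegative classical solution of
`Δu + (μ/δ²)u = g(‖∇u‖)` vanishing at a point of a connected domain vanishes identically. -/
theorem stmt_2 (N : ℕ) (hN : 3 ≤ N) (μ : ℝ) (hμ : μ ∈ Set.Ioc (0:ℝ) (1/4))
    (Ω : Set (EuclideanSpace ℝ (Fin N))) (hne : Ω.Nonempty)
    (hbdd : Bornology.IsBounded Ω) (hop : IsOpen Ω) (hconn : IsConnected Ω)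
    (g : ℝ → ℝ)
    (hglip : ∀ t ∈ Set.Ici (0:ℝ), ∃ K : NNReal, ∃ s ∈ nhdsWithin t (Set.Ici (0:ℝ)),
      LipschitzOnWith K g s)
    (hgmono : MonotoneOn g (Set.Ici (0:ℝ)))
    (hgnn : ∀ t ∈ Set.Ici (0:ℝ), 0 ≤ g t)
    (hg0 : g 0 = 0)
    (u : EuclideanSpace ℝ (Fin N) → ℝ)
    (hu : ContDiffOn ℝ 2 u Ω) (hunn : ∀ x ∈ Ω, 0 ≤ u x)
    (heq : ∀ x ∈ Ω, lap u x + (μ / (infDist x Ωᶜ) ^ 2) * u x = g ‖gradient u x‖)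
    (x₀ : EuclideanSpace ℝ (Fin N)) (hx₀ : x₀ ∈ Ω) (hu0 : u x₀ = 0) :
    ∀ x ∈ Ω, u x = 0 := by
  have hN1 : 0 < N := by omega
  have hucont : ContinuousOn u Ω := hu.continuousOn
  have hF : ContDiffOn ℝ 1 (fderiv ℝ u) Ω := hu.fderiv_of_isOpen hop (by norm_num)
  have hFcont : ContinuousOn (fun x => ‖fderiv ℝ u x‖) Ω := hF.continuousOn.norm
  -- pointwise differential inequality
  have hsub0 : ∀ x ∈ Ω, lap u x ≤ g ‖fderiv ℝ u x‖ := by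
    intro x hx
    have h1 := heq x hx
    have h2 : 0 ≤ (μ / (Metric.infDist x Ωᶜ) ^ 2) * u x := by
      apply mul_nonneg _ (hunn x hx)
      apply div_nonneg (le_of_lt hμ.1) (sq_nonneg _)
    rw [← norm_gradient_eq u x]
    linarith
  -- the zero set of u in Ω is open
  set S : Set (EuclideanSpace ℝ (Fin N)) := {x | x ∈ Ω ∧ u x = 0} with hSdef
  have hSopen : IsOpen S := by
    rw [Metric.isOpen_iff]
    rintro z ⟨hzΩ, hz0⟩
    obtain ⟨ε, hεpos, hεball⟩ := Metric.isOpen_iff.mp hop z hzΩ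
    set r : ℝ := ε/5 with hrdef
    have hrpos : 0 < r := by positivity
    refine ⟨r, hrpos, ?_⟩
    intro q hq
    have hqΩ : q ∈ Ω := hεball (by
      rw [mem_ball] at hq ⊢; linarith [hq])
    refine ⟨hqΩ, ?_⟩
    by_contra huq
    have huq' : 0 < u q := lt_of_le_of_ne (hunn q hqΩ) (Ne.symm huq)
    -- the zero set near z
    have hcb3 : closedBall z (3*r) ⊆ Ω := fun w hw => hεball (by
      rw [mem_closedBall] at hw; rw [mem_ball]; linarith [hw])
    set Zc : Set (EuclideanSpace ℝ (Fin N)) := closedBall z (3*r) ∩ u ⁻¹' {0} with hZcdef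
    have hZc_closed : IsClosed Zc :=
      ContinuousOn.preimage_isClosed_of_isClosed (hucont.mono hcb3)
        isClosed_closedBall isClosed_singleton
    have hZc_comp : IsCompact Zc :=
      (isCompact_closedBall z (3*r)).of_isClosed_subset hZc_closed inter_subset_left
    -- the segment from q to z
    set γ : ℝ → EuclideanSpace ℝ (Fin N) := fun t => q + t • (z - q) with hγdef
    have hγcont : Continuous γ := by continuity
    have hγdist : ∀ a b : ℝ, dist (γ a) (γ b) = |a - b| * ‖z - q‖ := by
      intro a b
      rw [hγdef]
      simp only
      rw [dist_eq_norm]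
      have : q + a • (z - q) - (q + b • (z - q)) = (a - b) • (z - q) := by module
      rw [this, norm_smul, Real.norm_eq_abs]
    have hγball : ∀ t ∈ Set.Icc (0:ℝ) 1, γ t ∈ ball z r := by
      intro t ht
      rw [mem_ball]
      have : γ t - z = (1 - t) • (q - z) := by rw [hγdef]; module
      rw [dist_eq_norm, this, norm_smul, Real.norm_eq_abs,
        abs_of_nonneg (by linarith [ht.2] : (0:ℝ) ≤ 1 - t)]
      have hqz : ‖q - z‖ < r := by rw [← dist_eq_norm]; exact mem_ball.mp hq
      nlinarith [norm_nonneg (q - z), ht.1, ht.2]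
    have hγΩ : ∀ t ∈ Set.Icc (0:ℝ) 1, γ t ∈ Ω := fun t ht => hεball (by
      have := mem_ball.mp (hγball t ht); rw [mem_ball]; linarith)
    -- the first zero along the segment
    set A : Set ℝ := Set.Icc (0:ℝ) 1 ∩ (u ∘ γ) ⁻¹' {0} with hAdef
    have hA_closed : IsClosed A :=
      ContinuousOn.preimage_isClosed_of_isClosed
        ((hucont.comp hγcont.continuousOn) (fun t ht => hγΩ t ht))
        isClosed_Icc isClosed_singleton
    have hA_ne : A.Nonempty := ⟨1, ⟨⟨by norm_num, le_refl 1⟩, by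
      have : γ 1 = z := by rw [hγdef]; simp
      simp [this, hz0]⟩⟩
    have hA_bdd : BddBelow A := ⟨0, fun t ht => ht.1.1⟩
    set T : ℝ := sInf A with hTdef
    have hTA : T ∈ A := hA_closed.csInf_mem hA_ne hA_bdd
    have hT0 : 0 < T := by
      rcases lt_or_eq_of_le hTA.1.1 with h | h
      · exact h
      · exfalso
        have : u (γ 0) = 0 := by
          have := hTA.2
          rw [← h] at this
          simpa using this
        rw [hγdef] at this
        simp at this
        exact huq this
    have hd : 0 < ‖z - q‖ := by
      rw [norm_pos_iff, sub_ne_zero]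
      intro h
      rw [h] at hz0
      exact huq hz0
    -- the point q₀ just before the first zero
    set σ : ℝ := min (T/2) (r/(4*‖z - q‖)) with hσdef
    have hσpos : 0 < σ := lt_min (by linarith) (by positivity)
    set t₁ : ℝ := T - σ with ht₁def
    have ht₁mem : t₁ ∈ Set.Icc (0:ℝ) 1 := by
      constructor
      · have : σ ≤ T/2 := min_le_left _ _
        rw [ht₁def]; linarith
      · rw [ht₁def]; linarith [hTA.1.2, hσpos]
    set q₀ : EuclideanSpace ℝ (Fin N) := γ t₁ with hq₀def
    have hq₀pos : 0 < u q₀ := by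
      have ht₁A : t₁ ∉ A := fun hc => by
        have := csInf_le hA_bdd hc
        rw [← hTdef] at this
        rw [ht₁def] at this
        linarith
      have : u q₀ ≠ 0 := fun hc => ht₁A ⟨ht₁mem, by simpa [hq₀def] using hc⟩
      exact lt_of_le_of_ne (hunn q₀ (hγΩ t₁ ht₁mem)) (Ne.symm this)
    have hdistq₀ : dist q₀ (γ T) ≤ r/4 := by
      rw [hq₀def, hγdist]
      have h1 : |t₁ - T| = σ := by
        rw [ht₁def]
        rw [abs_of_nonpos (by linarith)]
        ring
      rw [h1]
      have h2 : σ ≤ r/(4*‖z - q‖) := min_le_right _ _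
      calc σ * ‖z - q‖ ≤ (r/(4*‖z - q‖)) * ‖z - q‖ :=
            mul_le_mul_of_nonneg_right h2 (norm_nonneg _)
      _ = r/4 := by field_simp
    have hγTZc : γ T ∈ Zc := by
      refine ⟨ball_subset_closedBall (by
        have := hγball T hTA.1
        rw [mem_ball] at this ⊢
        linarith) , ?_⟩
      simpa using hTA.2
    have hZc_ne : Zc.Nonempty := ⟨γ T, hγTZc⟩
    -- the largest positivity ball around q₀
    set R : ℝ := Metric.infDist q₀ Zc with hRdef
    have hRr : R ≤ r/4 := le_trans (Metric.infDist_le_dist_of_mem hγTZc) hdistq₀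
    have hq₀Zc : q₀ ∉ Zc := fun hc => by
      have := hc.2
      simp at this
      linarith [hq₀pos]
    have hRpos : 0 < R := by
      rw [hRdef]
      exact (hZc_closed.notMem_iff_infDist_pos hZc_ne).mp hq₀Zc
    have hq₀z : dist q₀ z < r := mem_ball.mp (hγball t₁ ht₁mem)
    have hball' : closedBall q₀ R ⊆ Ω := by
      intro w hw
      apply hεball
      rw [mem_ball]
      calc dist w z ≤ dist w q₀ + dist q₀ z := dist_triangle _ _ _
      _ < ε := by
          have := mem_closedBall.mp hw
          linarith
    have hposball : ∀ w ∈ ball q₀ R, 0 < u w := by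
      intro w hw
      have hwΩ : w ∈ Ω := hball' (ball_subset_closedBall hw)
      rcases lt_or_eq_of_le (hunn w hwΩ) with h | h
      · exact h
      · exfalso
        have hwZc : w ∈ Zc := by
          refine ⟨?_, by simp [← h]⟩
          rw [mem_closedBall]
          calc dist w z ≤ dist w q₀ + dist q₀ z := dist_triangle _ _ _
          _ ≤ 3*r := by
              have := mem_ball.mp hw
              linarith
        have h5 : Metric.infDist q₀ Zc ≤ dist q₀ w := Metric.infDist_le_dist_of_mem hwZc
        rw [← hRdef] at h5
        rw [mem_ball, dist_comm] at hw
        linarith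
    obtain ⟨y, hyZc, hyR⟩ := hZc_comp.exists_infDist_eq_dist hZc_ne q₀
    rw [← hRdef] at hyR
    have hydist : dist y q₀ = R := by rw [dist_comm]; exact hyR.symm
    have huy : u y = 0 := by simpa using hyZc.2
    -- the Lipschitz-type bound on the closed ball
    obtain ⟨xM, hxM_mem, hxM⟩ := (isCompact_closedBall q₀ R).exists_isMaxOn
      (nonempty_closedBall.mpr (le_of_lt hRpos))
      (hFcont.mono hball')
    set M : ℝ := ‖fderiv ℝ u xM‖ with hMdef
    have hM0 : 0 ≤ M := norm_nonneg _
    obtain ⟨L, hL0, hLbound⟩ := g_linear_bound g hglip hgmono hgnn hg0 M hM0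
    have hsub : ∀ w ∈ closedBall q₀ R, lap u w ≤ L * ‖fderiv ℝ u w‖ := by
      intro w hw
      have hwΩ : w ∈ Ω := hball' hw
      calc lap u w ≤ g ‖fderiv ℝ u w‖ := hsub0 w hwΩ
      _ ≤ L * ‖fderiv ℝ u w‖ := hLbound _ ⟨norm_nonneg _, hxM hw⟩
    exact hopf_contradiction hN1 hop hu hunn hL0 hRpos hball' hposball hydist huy hsub
  -- conclude by connectedness
  intro x hx
  by_contra hux
  have hVopen : IsOpen (Ω ∩ u ⁻¹' ({0}ᶜ)) :=
    hucont.isOpen_inter_preimage hop (isOpen_compl_singleton)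
  obtain ⟨w, hwΩ, hwS, hwV⟩ := hconn.isPreconnected S (Ω ∩ u ⁻¹' ({0}ᶜ)) hSopen hVopen
    (fun v hv => by
      by_cases h : u v = 0
      · exact Or.inl ⟨hv, h⟩
      · exact Or.inr ⟨hv, h⟩)
    ⟨x₀, hx₀, hx₀, hu0⟩ ⟨x, hx, hx, hux⟩
  exact hwV.2 hwS.2
end

section
/- Let q be a real number with 1 < q < 2. Then for all nonnegative real numbers h₁, h₂, k₁, k₂: (k₁² + k₂²)^{q/2} − (h₁² + h₂²)^{q/2} ≤ (h₁^{q−1} + h₂^{q−1} + k₁^{q−1} + k₂^{q−1})·(|h₁ − k₁| + |h₂ − k₂|). -/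
open Real

private lemma aux_subadd (x y p : ℝ) (hx : 0 ≤ x) (hy : 0 ≤ y) (hp : 0 ≤ p) (hp1 : p ≤ 1) :
    (x + y) ^ p ≤ x ^ p + y ^ p := by
  have h := NNReal.rpow_add_le_add_rpow (⟨x, hx⟩ : NNReal) (⟨y, hy⟩ : NNReal) hp hp1
  have h2 := NNReal.coe_le_coe.2 h
  push_cast [NNReal.coe_rpow] at h2
  exact h2

private lemma aux_diff (q a b : ℝ) (hq1 : 1 < q) (hq2 : q < 2) (hb : 0 ≤ b) (hab : b ≤ a) :
    a ^ q - b ^ q ≤ (a - b) * (a ^ (q - 1) + b ^ (q - 1)) := by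
  have ha : 0 ≤ a := hb.trans hab
  have key : b * a ^ (q - 1) ≤ a * b ^ (q - 1) := by
    rcases eq_or_lt_of_le hb with hb0 | hb0
    · simp [← hb0, Real.zero_rpow (by linarith : q - 1 ≠ 0)]
    · have ha0 : 0 < a := lt_of_lt_of_le hb0 hab
      have hmono : a ^ (q - 2) ≤ b ^ (q - 2) :=
        Real.rpow_le_rpow_of_nonpos hb0 hab (by linarith)
      have e1 : a ^ (q - 1) = a ^ (q - 2) * a := by
        rw [← Real.rpow_add_one ha0.ne' (q - 2)]; ring_nf
      have e2 : b ^ (q - 1) = b ^ (q - 2) * b := by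
        rw [← Real.rpow_add_one hb0.ne' (q - 2)]; ring_nf
      rw [e1, e2]
      calc b * (a ^ (q - 2) * a) = (b * a) * a ^ (q - 2) := by ring
        _ ≤ (b * a) * b ^ (q - 2) := by
            exact mul_le_mul_of_nonneg_left hmono (by positivity)
        _ = a * (b ^ (q - 2) * b) := by ring
  have eaq : a ^ q = a * a ^ (q - 1) := by
    rw [← Real.rpow_one_add' ha (by linarith : 1 + (q - 1) ≠ 0)]; ring_nf
  have ebq : b ^ q = b * b ^ (q - 1) := by
    rw [← Real.rpow_one_add' hb (by linarith : 1 + (q - 1) ≠ 0)]; ring_nf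
  nlinarith [key]

/-- The algebraic inequality (5.21) used in the uniqueness part of Theorem G. -/
theorem stmt_5 (q : ℝ) (hq1 : 1 < q) (hq2 : q < 2)
    (h₁ h₂ k₁ k₂ : ℝ) (hh₁ : 0 ≤ h₁) (hh₂ : 0 ≤ h₂) (hk₁ : 0 ≤ k₁) (hk₂ : 0 ≤ k₂) :
    (k₁ ^ 2 + k₂ ^ 2) ^ (q / 2) - (h₁ ^ 2 + h₂ ^ 2) ^ (q / 2)
      ≤ (h₁ ^ (q - 1) + h₂ ^ (q - 1) + k₁ ^ (q - 1) + k₂ ^ (q - 1))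
          * (|h₁ - k₁| + |h₂ - k₂|) := by
  set Sh : ℝ := h₁ ^ 2 + h₂ ^ 2 with hSh
  set Sk : ℝ := k₁ ^ 2 + k₂ ^ 2 with hSk
  have hSh0 : 0 ≤ Sh := by positivity
  have hSk0 : 0 ≤ Sk := by positivity
  set A : ℝ := Real.sqrt Sh with hA
  set B : ℝ := Real.sqrt Sk with hB
  have hA0 : 0 ≤ A := Real.sqrt_nonneg _
  have hB0 : 0 ≤ B := Real.sqrt_nonneg _
  set d : ℝ := |h₁ - k₁| + |h₂ - k₂| with hd
  have hd0 : 0 ≤ d := by positivity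
  -- rewrite the rpow of sums as powers of sqrt
  have hpow : ∀ (S : ℝ), 0 ≤ S → ∀ r : ℝ, S ^ (r / 2) = (Real.sqrt S) ^ r := by
    intro S hS r
    rw [Real.sqrt_eq_rpow, ← Real.rpow_mul hS]
    ring_nf
  -- coordinate bound : x ≤ sqrt (x^2 + y^2)
  have hcoord : ∀ x y : ℝ, 0 ≤ x → x ≤ Real.sqrt (x ^ 2 + y ^ 2) := by
    intro x y hx
    have h := Real.sqrt_le_sqrt (show x ^ 2 ≤ x ^ 2 + y ^ 2 by nlinarith)
    rwa [Real.sqrt_sq hx] at h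
  -- rpow of a square
  have hsq : ∀ (x : ℝ), 0 ≤ x → ∀ r : ℝ, ((x ^ 2 : ℝ)) ^ (r / 2) = x ^ r := by
    intro x hx r
    rw [show ((x ^ 2 : ℝ)) = x ^ ((2 : ℕ) : ℝ) by rw [Real.rpow_natCast],
      ← Real.rpow_mul hx]
    congr 1
    push_cast
    ring
  -- subadditivity bounds for the (q-1)-power of the norms
  have hbound : ∀ x y : ℝ, 0 ≤ x → 0 ≤ y →
      (Real.sqrt (x ^ 2 + y ^ 2)) ^ (q - 1) ≤ x ^ (q - 1) + y ^ (q - 1) := by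
    intro x y hx hy
    rw [← hpow _ (by positivity) (q - 1)]
    calc (x ^ 2 + y ^ 2) ^ ((q - 1) / 2)
        ≤ (x ^ 2 : ℝ) ^ ((q - 1) / 2) + (y ^ 2 : ℝ) ^ ((q - 1) / 2) :=
          aux_subadd _ _ _ (by positivity) (by positivity) (by linarith) (by linarith)
      _ = x ^ (q - 1) + y ^ (q - 1) := by rw [hsq x hx, hsq y hy]
  -- triangle inequality
  have htri : B ≤ A + d := by
    have hA2 : A ^ 2 = Sh := Real.sq_sqrt hSh0
    have h1A : h₁ ≤ A := hcoord h₁ h₂ hh₁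
    have h2A : h₂ ≤ A := by
      rw [hA, hSh, add_comm]; exact hcoord h₂ h₁ hh₂
    have hk1 : k₁ ≤ h₁ + |h₁ - k₁| := by
      rcases abs_cases (h₁ - k₁) with ⟨h, _⟩ | ⟨h, _⟩ <;> linarith
    have hk2 : k₂ ≤ h₂ + |h₂ - k₂| := by
      rcases abs_cases (h₂ - k₂) with ⟨h, _⟩ | ⟨h, _⟩ <;> linarith
    have hd1 : |h₁ - k₁| ≤ d := by simp [hd, abs_nonneg]
    have hd2 : |h₂ - k₂| ≤ d := by simp [hd, abs_nonneg]
    have hSkle : Sk ≤ (A + d) ^ 2 := by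
      have e1 : 0 ≤ |h₁ - k₁| := abs_nonneg _
      have e2 : 0 ≤ |h₂ - k₂| := abs_nonneg _
      nlinarith [sq_nonneg (h₁ - k₁), sq_nonneg (h₂ - k₂)]
    calc B = Real.sqrt Sk := hB
      _ ≤ Real.sqrt ((A + d) ^ 2) := Real.sqrt_le_sqrt hSkle
      _ = A + d := Real.sqrt_sq (by linarith)
  -- main case split
  rw [show Sk ^ (q / 2) = B ^ q from hpow Sk hSk0 q,
    show Sh ^ (q / 2) = A ^ q from hpow Sh hSh0 q]
  have hRHS0 : 0 ≤ (h₁ ^ (q - 1) + h₂ ^ (q - 1) + k₁ ^ (q - 1) + k₂ ^ (q - 1)) * d := by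
    have := Real.rpow_nonneg hh₁ (q - 1)
    have := Real.rpow_nonneg hh₂ (q - 1)
    have := Real.rpow_nonneg hk₁ (q - 1)
    have := Real.rpow_nonneg hk₂ (q - 1)
    positivity
  rcases le_or_gt B A with hBA | hAB
  · have : B ^ q ≤ A ^ q := Real.rpow_le_rpow hB0 hBA (by linarith)
    linarith
  · have hmain := aux_diff q B A hq1 hq2 hA0 hAB.le
    have hfac : B ^ (q - 1) + A ^ (q - 1)
        ≤ h₁ ^ (q - 1) + h₂ ^ (q - 1) + k₁ ^ (q - 1) + k₂ ^ (q - 1) := by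
      have hBb := hbound k₁ k₂ hk₁ hk₂
      have hAb := hbound h₁ h₂ hh₁ hh₂
      rw [← hSk] at hBb; rw [← hSh] at hAb
      rw [hB, hA]
      linarith
    have hBA' : B - A ≤ d := by linarith
    calc B ^ q - A ^ q ≤ (B - A) * (B ^ (q - 1) + A ^ (q - 1)) := hmain
      _ ≤ d * (h₁ ^ (q - 1) + h₂ ^ (q - 1) + k₁ ^ (q - 1) + k₂ ^ (q - 1)) := by
          apply mul_le_mul hBA' hfac (by positivity) hd0
      _ = (h₁ ^ (q - 1) + h₂ ^ (q - 1) + k₁ ^ (q - 1) + k₂ ^ (q - 1))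
            * (|h₁ - k₁| + |h₂ - k₂|) := by rw [hd]; ring
end

section
/- Let N ≥ 2 be an integer, θ > 0, γ a real number with 0 ≤ γ < θN/(N−1), and M > 0. There exists a constant c > 0 depending only on N, θ, γ and M such that for every nonempty open set Ω ⊂ ℝ^N with nonempty complement, every y ∈ ℝ^N and every λ > 0: ∫_{A_{λ}(y)} δ(x)^γ dx ≤ c·λ^{−(N+γ)/(N+θ−1)}, where δ(x) denotes the Euclidean distance from x to the complement of Ω and A_{λ}(y) := {x ∈ Ω : x ≠ y, M·|x−y|^{1−N−θ} > λ and M·|x−y|^{1−N} > λ·δ(x)^{θ}}. -/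
open MeasureTheory Metric Set
open scoped ENNReal

lemma aux_ball (N : ℕ) (hN : 1 ≤ N) (β : ℝ) (hβ0 : 0 ≤ β) (hβN : β < N) :
    ∃ C : ℝ≥0∞, C ≠ ⊤ ∧ ∀ (y : EuclideanSpace ℝ (Fin N)) (R : ℝ), 0 < R →
      ∫⁻ x in Metric.ball y R, ENNReal.ofReal (‖x - y‖ ^ (-β))
        ≤ C * ENNReal.ofReal (R ^ ((N : ℝ) - β)) := by
  set q : ℝ≥0∞ := ENNReal.ofReal ((2 : ℝ) ^ (β - (N : ℝ))) with hq_def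
  have hq1 : q < 1 := by
    rw [hq_def, ← ENNReal.ofReal_one]
    have hN1 : (1:ℝ) ≤ (N:ℝ) := by exact_mod_cast hN
    exact (ENNReal.ofReal_lt_ofReal_iff_of_nonneg (by positivity)).mpr
      (Real.rpow_lt_one_of_one_lt_of_neg one_lt_two (by linarith))
  set V : ℝ≥0∞ := volume (Metric.ball (0 : EuclideanSpace ℝ (Fin N)) 1) with hV_def
  have hVtop : V ≠ ⊤ := measure_ball_lt_top.ne
  refine ⟨ENNReal.ofReal ((2 : ℝ) ^ β) * V * (1 - q)⁻¹, ?_, ?_⟩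
  · exact ENNReal.mul_ne_top (ENNReal.mul_ne_top ENNReal.ofReal_ne_top hVtop)
      (ENNReal.inv_ne_top.mpr (tsub_pos_of_lt hq1).ne')
  intro y R hR
  set A : ℕ → Set (EuclideanSpace ℝ (Fin N)) := fun k =>
    Metric.closedBall y (R * 2 ^ (-(k : ℝ))) \ Metric.ball y (R * 2 ^ (-(k : ℝ) - 1)) with hA_def
  have hcover : Metric.ball y R ⊆ {y} ∪ ⋃ k, A k := by
    intro x hx
    rcases eq_or_ne x y with h | h
    · exact Or.inl h
    · refine Or.inr (Set.mem_iUnion.2 ?_)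
      have ht0 : 0 < dist x y := dist_pos.mpr h
      have htR : dist x y < R := mem_ball.mp hx
      have hRt : 1 < R / dist x y := (one_lt_div ht0).mpr htR
      set k := ⌊Real.logb 2 (R / dist x y)⌋₊ with hk
      have hlog0 : 0 ≤ Real.logb 2 (R / dist x y) := Real.logb_nonneg one_lt_two hRt.le
      refine ⟨k, ?_, ?_⟩
      · -- dist x y ≤ R * 2 ^ (-(k:ℝ))
        have h1 : (2 : ℝ) ^ (k : ℝ) ≤ R / dist x y := by
          calc (2 : ℝ) ^ (k : ℝ) ≤ (2 : ℝ) ^ Real.logb 2 (R / dist x y) :=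
                Real.rpow_le_rpow_of_exponent_le one_le_two (Nat.floor_le hlog0)
            _ = R / dist x y := Real.rpow_logb two_pos (by norm_num) (by positivity)
        have h2 : dist x y * (2 : ℝ) ^ (k : ℝ) ≤ R := by
          rw [mul_comm]
          exact (le_div_iff₀ ht0).mp h1
        have := mul_le_mul_of_nonneg_right h2 (le_of_lt (Real.rpow_pos_of_pos two_pos (-(k : ℝ))))
        rw [mul_assoc, ← Real.rpow_add two_pos, add_neg_cancel, Real.rpow_zero, mul_one] at this
        exact mem_closedBall.mpr this
      · -- not in the small ball
        simp only [mem_ball, not_lt]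
        have h1 : R / dist x y < (2 : ℝ) ^ ((k : ℝ) + 1) := by
          calc R / dist x y = (2 : ℝ) ^ Real.logb 2 (R / dist x y) :=
                (Real.rpow_logb two_pos (by norm_num) (by positivity)).symm
            _ < (2 : ℝ) ^ ((k : ℝ) + 1) := by
                apply Real.rpow_lt_rpow_of_exponent_lt one_lt_two
                exact Nat.lt_floor_add_one _
        have h2 : R < dist x y * (2 : ℝ) ^ ((k : ℝ) + 1) := by
          rw [mul_comm]
          exact (div_lt_iff₀ ht0).mp h1
        have := mul_lt_mul_of_pos_right h2 (Real.rpow_pos_of_pos two_pos (-((k : ℝ) + 1)))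
        rw [mul_assoc, ← Real.rpow_add two_pos, add_neg_cancel, Real.rpow_zero, mul_one] at this
        have heq : -(k : ℝ) - 1 = -((k : ℝ) + 1) := by ring
        rw [heq]
        exact this.le
  calc ∫⁻ x in Metric.ball y R, ENNReal.ofReal (‖x - y‖ ^ (-β))
      ≤ ∫⁻ x in {y} ∪ ⋃ k, A k, ENNReal.ofReal (‖x - y‖ ^ (-β)) := lintegral_mono_set hcover
    _ ≤ (∫⁻ x in {y}, ENNReal.ofReal (‖x - y‖ ^ (-β)))
        + ∫⁻ x in ⋃ k, A k, ENNReal.ofReal (‖x - y‖ ^ (-β)) := lintegral_union_le _ _ _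
    _ = ∫⁻ x in ⋃ k, A k, ENNReal.ofReal (‖x - y‖ ^ (-β)) := by
        have hsing : volume ({y} : Set (EuclideanSpace ℝ (Fin N))) = 0 := by
          rw [← Metric.closedBall_zero,
            Measure.addHaar_closedBall _ _ le_rfl, finrank_euclideanSpace_fin,
            zero_pow (by omega), ENNReal.ofReal_zero, zero_mul]
        rw [setLIntegral_measure_zero _ _ hsing, zero_add]
    _ ≤ ∑' (k : ℕ), ∫⁻ x in A k, ENNReal.ofReal (‖x - y‖ ^ (-β)) := lintegral_iUnion_le _ _
    _ ≤ ∑' (k : ℕ), ENNReal.ofReal ((R * 2 ^ (-(k : ℝ) - 1)) ^ (-β)) * volume (A k) := by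
        refine ENNReal.tsum_le_tsum fun k => ?_
        have : ∫⁻ x in A k, ENNReal.ofReal (‖x - y‖ ^ (-β))
            ≤ ∫⁻ _ in A k, ENNReal.ofReal ((R * 2 ^ (-(k : ℝ) - 1)) ^ (-β)) := by
          refine setLIntegral_mono measurable_const fun x hx => ?_
          apply ENNReal.ofReal_le_ofReal
          apply Real.rpow_le_rpow_of_nonpos (by positivity) ?_ (by linarith)
          rw [← dist_eq_norm]
          exact not_lt.mp (fun h => hx.2 (mem_ball.mpr h))
        rwa [setLIntegral_const] at this
    _ ≤ ∑' (k : ℕ), ENNReal.ofReal ((R * 2 ^ (-(k : ℝ) - 1)) ^ (-β))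
          * (ENNReal.ofReal ((R * 2 ^ (-(k : ℝ))) ^ (N : ℕ)) * V) := by
        refine ENNReal.tsum_le_tsum fun k => ?_
        gcongr
        calc volume (A k) ≤ volume (Metric.closedBall y (R * 2 ^ (-(k : ℝ)))) :=
              measure_mono diff_subset
          _ = ENNReal.ofReal ((R * 2 ^ (-(k : ℝ))) ^ Module.finrank ℝ (EuclideanSpace ℝ (Fin N)))
              * volume (Metric.ball (0 : EuclideanSpace ℝ (Fin N)) 1) :=
              Measure.addHaar_closedBall _ _ (by positivity)
          _ = ENNReal.ofReal ((R * 2 ^ (-(k : ℝ))) ^ (N : ℕ)) * V := by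
              rw [finrank_euclideanSpace_fin]
    _ = ∑' (k : ℕ), ENNReal.ofReal (R ^ ((N : ℝ) - β) * (2 : ℝ) ^ β) * q ^ k * V := by
        refine tsum_congr fun k => ?_
        have key : (R * 2 ^ (-(k : ℝ) - 1)) ^ (-β) * (R * 2 ^ (-(k : ℝ))) ^ (N : ℕ)
            = R ^ ((N : ℝ) - β) * (2 : ℝ) ^ β * ((2 : ℝ) ^ (β - (N : ℝ))) ^ (k : ℕ) := by
          have h2 : (0 : ℝ) < 2 ^ (-(k : ℝ) - 1) := Real.rpow_pos_of_pos two_pos _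
          have h3 : (0 : ℝ) < 2 ^ (-(k : ℝ)) := Real.rpow_pos_of_pos two_pos _
          rw [← Real.rpow_natCast (R * 2 ^ (-(k : ℝ))) N,
            ← Real.rpow_natCast ((2 : ℝ) ^ (β - (N : ℝ))) k,
            Real.mul_rpow hR.le h2.le, Real.mul_rpow hR.le h3.le,
            ← Real.rpow_mul (by norm_num) , ← Real.rpow_mul (by norm_num),
            ← Real.rpow_mul (by norm_num)]
          rw [mul_mul_mul_comm, ← Real.rpow_add hR, ← Real.rpow_add two_pos,
            mul_assoc, ← Real.rpow_add two_pos]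
          congr 1 <;> ring_nf
        rw [← mul_assoc, ← ENNReal.ofReal_mul (by positivity), key,
          ENNReal.ofReal_mul (by positivity), ENNReal.ofReal_pow (by positivity), hq_def]
    _ = ∑' (k : ℕ), ENNReal.ofReal (R ^ ((N : ℝ) - β) * (2 : ℝ) ^ β) * V * q ^ k :=
        tsum_congr fun k => by ring
    _ = ENNReal.ofReal (R ^ ((N : ℝ) - β) * (2 : ℝ) ^ β) * V * ∑' (k : ℕ), q ^ k :=
        ENNReal.tsum_mul_left
    _ = ENNReal.ofReal ((2 : ℝ) ^ β) * V * (1 - q)⁻¹ * ENNReal.ofReal (R ^ ((N : ℝ) - β)) := by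
        rw [ENNReal.tsum_geometric, ENNReal.ofReal_mul (by positivity)]
        ring
/-- Step 3 of the proof of Lemma 3.2: the weighted level-set estimate. -/
theorem stmt_7 (N : ℕ) (hN : 2 ≤ N) (θ γ M : ℝ)
    (hθ : 0 < θ) (hγ0 : 0 ≤ γ) (hγ : γ < θ * (N : ℝ) / ((N : ℝ) - 1)) (hM : 0 < M) :
    ∃ c : ℝ, 0 < c ∧
      ∀ Ω : Set (EuclideanSpace ℝ (Fin N)), IsOpen Ω → Ω.Nonempty → Ωᶜ.Nonempty →
        ∀ (y : EuclideanSpace ℝ (Fin N)) (lam : ℝ), 0 < lam →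
          ∫ x in {x | x ∈ Ω ∧ x ≠ y ∧ lam < M * ‖x - y‖ ^ (1 - (N : ℝ) - θ) ∧
              lam * (infDist x Ωᶜ) ^ θ < M * ‖x - y‖ ^ (1 - (N : ℝ))},
            (infDist x Ωᶜ) ^ γ
          ≤ c * lam ^ (-(((N : ℝ) + γ) / ((N : ℝ) + θ - 1))) := by
  have hN1 : (2 : ℝ) ≤ (N : ℝ) := by exact_mod_cast hN
  set β : ℝ := γ * ((N : ℝ) - 1) / θ with hβ_def
  set p : ℝ := (N : ℝ) + θ - 1 with hp_def
  set e : ℝ := ((N : ℝ) + γ) / ((N : ℝ) + θ - 1) with he_def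
  have hp : 0 < p := by rw [hp_def]; linarith
  have hβ0 : 0 ≤ β := by
    rw [hβ_def]
    exact div_nonneg (mul_nonneg hγ0 (by linarith)) hθ.le
  have hβN : β < (N : ℝ) := by
    rw [hβ_def, div_lt_iff₀ hθ]
    have h1 : γ * ((N : ℝ) - 1) < θ * (N : ℝ) / ((N : ℝ) - 1) * ((N : ℝ) - 1) := by
      apply mul_lt_mul_of_pos_right hγ; linarith
    rw [div_mul_cancel₀ _ (by linarith : (N : ℝ) - 1 ≠ 0)] at h1
    linarith
  obtain ⟨C, hCtop, hC⟩ := aux_ball N (by omega) β hβ0 hβN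
  refine ⟨C.toReal * M ^ e + 1, by positivity, fun Ω hΩ hΩne hΩcne y lam hlam => ?_⟩
  set A : Set (EuclideanSpace ℝ (Fin N)) :=
    {x | x ∈ Ω ∧ x ≠ y ∧ lam < M * ‖x - y‖ ^ (1 - (N : ℝ) - θ) ∧
      lam * (infDist x Ωᶜ) ^ θ < M * ‖x - y‖ ^ (1 - (N : ℝ))} with hA_def
  set R : ℝ := (M / lam) ^ p⁻¹ with hR_def
  set K : ℝ := (M / lam) ^ (γ / θ) with hK_def
  have hMl : 0 < M / lam := div_pos hM hlam
  have hR : 0 < R := Real.rpow_pos_of_pos hMl _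
  have hK : 0 < K := Real.rpow_pos_of_pos hMl _
  -- A is inside the ball of radius R
  have hsub : A ⊆ ball y R := by
    intro x hx
    obtain ⟨-, hxy, h1, -⟩ := hx
    set t : ℝ := ‖x - y‖ with ht_def
    have ht : 0 < t := by
      rw [ht_def, norm_pos_iff, sub_ne_zero]; exact hxy
    have hexp : 1 - (N : ℝ) - θ = -p := by rw [hp_def]; ring
    rw [hexp, Real.rpow_neg ht.le] at h1
    have h2 : lam * t ^ p < M := by
      have := mul_lt_mul_of_pos_right h1 (Real.rpow_pos_of_pos ht p)
      rwa [mul_assoc, inv_mul_cancel₀ (Real.rpow_pos_of_pos ht p).ne', mul_one] at this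
    have h3 : t ^ p < M / lam := (lt_div_iff₀' hlam).mpr h2
    have h4 : (t ^ p) ^ p⁻¹ < R := by
      rw [hR_def]
      exact Real.rpow_lt_rpow (Real.rpow_nonneg ht.le _) h3 (by positivity)
    rw [← Real.rpow_mul ht.le, mul_inv_cancel₀ hp.ne', Real.rpow_one] at h4
    rw [mem_ball, dist_eq_norm]
    exact h4
  -- pointwise bound on A
  have hpt : ∀ x ∈ A, infDist x Ωᶜ ^ γ ≤ K * ‖x - y‖ ^ (-β) := by
    intro x hx
    obtain ⟨-, hxy, -, h2⟩ := hx
    set t : ℝ := ‖x - y‖ with ht_def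
    have ht : 0 < t := by
      rw [ht_def, norm_pos_iff, sub_ne_zero]; exact hxy
    have hδ0 : 0 ≤ infDist x Ωᶜ := infDist_nonneg
    set s : ℝ := M / lam * t ^ (1 - (N : ℝ)) with hs_def
    have hs : 0 < s := by
      rw [hs_def]; positivity
    have h3 : infDist x Ωᶜ ^ θ < s := by
      rw [hs_def, div_mul_eq_mul_div, lt_div_iff₀ hlam, mul_comm]
      exact h2
    have h4 : infDist x Ωᶜ ≤ s ^ θ⁻¹ := by
      have := Real.rpow_le_rpow (Real.rpow_nonneg hδ0 θ) h3.le (by positivity : (0:ℝ) ≤ θ⁻¹)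
      rwa [← Real.rpow_mul hδ0, mul_inv_cancel₀ hθ.ne', Real.rpow_one] at this
    calc infDist x Ωᶜ ^ γ ≤ (s ^ θ⁻¹) ^ γ := Real.rpow_le_rpow hδ0 h4 hγ0
      _ = s ^ (θ⁻¹ * γ) := (Real.rpow_mul hs.le _ _).symm
      _ = (M / lam) ^ (θ⁻¹ * γ) * (t ^ (1 - (N : ℝ))) ^ (θ⁻¹ * γ) := by
          rw [hs_def, Real.mul_rpow hMl.le (Real.rpow_nonneg ht.le _)]
      _ = K * t ^ (-β) := by
          rw [← Real.rpow_mul ht.le, hK_def, hβ_def]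
          congr 1
          · congr 1; field_simp
          · congr 1; field_simp; ring
  -- measurability
  have hδmeas : Measurable fun x : EuclideanSpace ℝ (Fin N) => infDist x Ωᶜ ^ γ := by
    have : Measurable fun x : EuclideanSpace ℝ (Fin N) => infDist x Ωᶜ :=
      (continuous_infDist_pt Ωᶜ).measurable
    fun_prop
  have hgmeas : Measurable fun x : EuclideanSpace ℝ (Fin N) =>
      ENNReal.ofReal (‖x - y‖ ^ (-β)) := by fun_prop
  have hL : (∫⁻ x in A, ENNReal.ofReal (infDist x Ωᶜ ^ γ))
      ≤ ENNReal.ofReal K * (C * ENNReal.ofReal (R ^ ((N : ℝ) - β))) := by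
    calc ∫⁻ x in A, ENNReal.ofReal (infDist x Ωᶜ ^ γ)
        ≤ ∫⁻ x in A, ENNReal.ofReal (K * ‖x - y‖ ^ (-β)) := by
          refine setLIntegral_mono (by fun_prop)
            fun x hx => ENNReal.ofReal_le_ofReal (hpt x hx)
      _ ≤ ∫⁻ x in ball y R, ENNReal.ofReal (K * ‖x - y‖ ^ (-β)) := lintegral_mono_set hsub
      _ = ENNReal.ofReal K * ∫⁻ x in ball y R, ENNReal.ofReal (‖x - y‖ ^ (-β)) := by
          simp_rw [ENNReal.ofReal_mul hK.le]
          exact lintegral_const_mul _ hgmeas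
      _ ≤ ENNReal.ofReal K * (C * ENNReal.ofReal (R ^ ((N : ℝ) - β))) := by
          gcongr
          exact hC y R hR
  have hfin : ENNReal.ofReal K * (C * ENNReal.ofReal (R ^ ((N : ℝ) - β))) ≠ ⊤ :=
    ENNReal.mul_ne_top ENNReal.ofReal_ne_top (ENNReal.mul_ne_top hCtop ENNReal.ofReal_ne_top)
  have hKR : K * R ^ ((N : ℝ) - β) = M ^ e * lam ^ (-e) := by
    rw [hK_def, hR_def, ← Real.rpow_mul hMl.le, ← Real.rpow_add hMl]
    have hexp : γ / θ + p⁻¹ * ((N : ℝ) - β) = e := by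
      rw [he_def, hβ_def, hp_def]
      have hq : (N : ℝ) + θ - 1 ≠ 0 := by linarith
      field_simp
      ring
    rw [hexp, Real.div_rpow hM.le hlam.le, Real.rpow_neg hlam.le, div_eq_mul_inv]
  calc ∫ x in A, infDist x Ωᶜ ^ γ
      = (∫⁻ x in A, ENNReal.ofReal (infDist x Ωᶜ ^ γ)).toReal :=
        integral_eq_lintegral_of_nonneg_ae
          (ae_of_all _ fun x => Real.rpow_nonneg infDist_nonneg γ)
          hδmeas.aestronglyMeasurable
    _ ≤ (ENNReal.ofReal K * (C * ENNReal.ofReal (R ^ ((N : ℝ) - β)))).toReal :=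
        ENNReal.toReal_mono hfin hL
    _ = K * (C.toReal * R ^ ((N : ℝ) - β)) := by
        rw [ENNReal.toReal_mul, ENNReal.toReal_mul, ENNReal.toReal_ofReal hK.le,
          ENNReal.toReal_ofReal (Real.rpow_nonneg hR.le _)]
    _ = C.toReal * M ^ e * lam ^ (-e) := by
        rw [← mul_assoc, mul_comm K C.toReal, mul_assoc, hKR, ← mul_assoc]
    _ ≤ (C.toReal * M ^ e + 1) * lam ^ (-e) := by
        apply mul_le_mul_of_nonneg_right (by linarith) (Real.rpow_nonneg hlam.le _)
end

section
/- Let N ≥ 3 be an integer, μ ∈ (0,1/4], α := 1/2 + √(1/4 − μ), and let q satisfy 1 < q < (N+α)/(N+α−1). For every R₁ > 0 there exists a constant c > 0 depending only on N, μ, q and R₁ such that for every measurable set Ω ⊆ B(0,R₁) ⊂ ℝ^N and every x ∈ Ω with x ≠ 0: ∫_Ω |x−y|^{2−N−2α}·|y|^{α−(N+α−1)q} dy ≤ c·|x|^{2−α−(N+α−1)q}. -/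
open MeasureTheory Metric Set

private lemma two_rpow_neg_nat' (n : ℕ) : (2:ℝ) ^ (-(n:ℝ)) = (2⁻¹:ℝ) ^ n := by
  rw [Real.rpow_neg (by norm_num), Real.rpow_natCast, inv_pow]

private lemma rpow_helper2' {ρ : ℝ} (hρ : 0 < ρ) (s t u v : ℝ) :
    (ρ * (2:ℝ) ^ u) ^ s * (ρ * (2:ℝ) ^ v) ^ t = ρ ^ (s + t) * (2:ℝ) ^ (u * s + v * t) := by
  have h2 : (0:ℝ) < 2 := two_pos
  rw [Real.mul_rpow hρ.le (Real.rpow_nonneg h2.le _),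
    Real.mul_rpow hρ.le (Real.rpow_nonneg h2.le _),
    ← Real.rpow_mul h2.le, ← Real.rpow_mul h2.le,
    mul_mul_mul_comm, ← Real.rpow_add hρ, ← Real.rpow_add h2]

private lemma lint_ball_le' (N : ℕ) (hN : 0 < N) {s : ℝ} (hsN : -(N:ℝ) < s) (hs0 : s ≤ 0) :
    ∃ C : ENNReal, C ≠ ⊤ ∧ ∀ ρ : ℝ, 0 < ρ →
      (∫⁻ y in ball (0 : EuclideanSpace ℝ (Fin N)) ρ, ENNReal.ofReal (‖y‖ ^ s))
        ≤ C * ENNReal.ofReal (ρ ^ ((N:ℝ) + s)) := by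
  haveI : Nonempty (Fin N) := ⟨⟨0, hN⟩⟩
  have h2 : (0:ℝ) < 2 := two_pos
  set V := (volume : Measure (EuclideanSpace ℝ (Fin N))) (ball 0 1) with hV
  have hVtop : V ≠ ⊤ := measure_ball_lt_top.ne
  set r0 : ENNReal := ENNReal.ofReal ((2:ℝ) ^ (-((N:ℝ) + s))) with hr0def
  have hNs : 0 < (N:ℝ) + s := by linarith
  have hr0 : r0 < 1 := by
    rw [hr0def, ENNReal.ofReal_lt_one]
    exact Real.rpow_lt_one_of_one_lt_of_neg one_lt_two (by linarith)
  have hgeom : (1 - r0)⁻¹ ≠ ⊤ := by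
    rw [ENNReal.inv_ne_top]
    exact (tsub_pos_of_lt hr0).ne'
  refine ⟨ENNReal.ofReal ((2:ℝ) ^ (-s)) * V * (1 - r0)⁻¹,
    ENNReal.mul_ne_top (ENNReal.mul_ne_top ENNReal.ofReal_ne_top hVtop) hgeom, fun ρ hρ => ?_⟩
  set A : ℕ → Set (EuclideanSpace ℝ (Fin N)) := fun k =>
    {y | ρ * (2:ℝ) ^ (-((k:ℝ) + 1)) ≤ ‖y‖ ∧ ‖y‖ < ρ * (2:ℝ) ^ (-(k:ℝ))} with hA
  have hmeasA : ∀ k, MeasurableSet (A k) := fun k =>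
    (measurableSet_le measurable_const measurable_norm).inter
      (measurableSet_lt measurable_norm measurable_const)
  have hcover : ball (0 : EuclideanSpace ℝ (Fin N)) ρ ⊆ {0} ∪ ⋃ k, A k := by
    intro y hy
    rcases eq_or_ne y 0 with rfl | hy0
    · exact Or.inl rfl
    refine Or.inr ?_
    have hy1 : 0 < ‖y‖ := norm_pos_iff.mpr hy0
    have hy2 : ‖y‖ < ρ := mem_ball_zero_iff.mp hy
    have hex : ∃ n : ℕ, ρ * (2:ℝ) ^ (-((n:ℝ) + 1)) ≤ ‖y‖ := by
      obtain ⟨n, hn⟩ := exists_pow_lt_of_lt_one (div_pos hy1 hρ) (by norm_num : (2⁻¹:ℝ) < 1)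
      refine ⟨n, ?_⟩
      have h1 : (2:ℝ) ^ (-((n:ℝ) + 1)) = (2⁻¹:ℝ) ^ (n+1) := by
        rw [show -((n:ℝ)+1) = -(((n+1:ℕ)):ℝ) by push_cast; ring, two_rpow_neg_nat']
      have h3 : ((2:ℝ)⁻¹) ^ (n+1) ≤ (2⁻¹:ℝ) ^ n :=
        pow_le_pow_of_le_one (by norm_num) (by norm_num) (Nat.le_succ n)
      have h4 : ρ * (2⁻¹:ℝ) ^ n < ‖y‖ := by
        have h5 := (lt_div_iff₀ hρ).mp hn
        linarith
      rw [h1]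
      nlinarith
    have hlow : ρ * (2:ℝ) ^ (-((Nat.find hex : ℝ) + 1)) ≤ ‖y‖ := Nat.find_spec hex
    have hup : ‖y‖ < ρ * (2:ℝ) ^ (-(Nat.find hex:ℝ)) := by
      rcases Nat.eq_zero_or_pos (Nat.find hex) with h0 | h0
      · rw [h0]; simpa using hy2
      · have hm := Nat.find_min hex (show Nat.find hex - 1 < Nat.find hex from Nat.sub_lt h0 one_pos)
        push_neg at hm
        have hcast : ((Nat.find hex - 1 : ℕ) : ℝ) + 1 = (Nat.find hex : ℝ) := by
          rw [Nat.cast_sub h0]; push_cast; ring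
        rwa [hcast] at hm
    exact mem_iUnion.mpr ⟨Nat.find hex, hlow, hup⟩
  calc ∫⁻ y in ball (0 : EuclideanSpace ℝ (Fin N)) ρ, ENNReal.ofReal (‖y‖ ^ s)
      ≤ ∫⁻ y in ({0} ∪ ⋃ k, A k : Set (EuclideanSpace ℝ (Fin N))), ENNReal.ofReal (‖y‖ ^ s) :=
        lintegral_mono_set hcover
    _ ≤ (∫⁻ y in ({0} : Set (EuclideanSpace ℝ (Fin N))), ENNReal.ofReal (‖y‖ ^ s))
        + ∫⁻ y in ⋃ k, A k, ENNReal.ofReal (‖y‖ ^ s) := lintegral_union_le _ _ _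
    _ ≤ 0 + ∑' k, ∫⁻ y in A k, ENNReal.ofReal (‖y‖ ^ s) := by
        gcongr
        · exact le_of_eq (setLIntegral_measure_zero _ _ (measure_singleton 0))
        · exact lintegral_iUnion_le _ _
    _ ≤ ∑' k, (ENNReal.ofReal (ρ ^ ((N:ℝ)+s) * (2:ℝ) ^ (-s)) * V) * r0 ^ k := by
        rw [zero_add]
        refine ENNReal.tsum_le_tsum fun k => ?_
        have hρk : 0 < ρ * (2:ℝ) ^ (-((k:ℝ)+1)) := mul_pos hρ (Real.rpow_pos_of_pos h2 _)
        have hρk' : 0 < ρ * (2:ℝ) ^ (-(k:ℝ)) := mul_pos hρ (Real.rpow_pos_of_pos h2 _)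
        calc ∫⁻ y in A k, ENNReal.ofReal (‖y‖ ^ s)
            ≤ ∫⁻ _ in A k, ENNReal.ofReal ((ρ * (2:ℝ) ^ (-((k:ℝ)+1))) ^ s) := by
              refine setLIntegral_mono' (hmeasA k) fun y hy => ?_
              exact ENNReal.ofReal_le_ofReal (Real.rpow_le_rpow_of_nonpos hρk hy.1 hs0)
          _ = ENNReal.ofReal ((ρ * (2:ℝ) ^ (-((k:ℝ)+1))) ^ s) * volume (A k) :=
              setLIntegral_const _ _
          _ ≤ ENNReal.ofReal ((ρ * (2:ℝ) ^ (-((k:ℝ)+1))) ^ s) *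
              (ENNReal.ofReal ((ρ * (2:ℝ) ^ (-(k:ℝ))) ^ N) * V) := by
              gcongr
              have hsub : A k ⊆ ball 0 (ρ * (2:ℝ) ^ (-(k:ℝ))) := fun y hy =>
                mem_ball_zero_iff.mpr hy.2
              calc volume (A k)
                  ≤ volume (ball (0:EuclideanSpace ℝ (Fin N)) (ρ * (2:ℝ) ^ (-(k:ℝ)))) :=
                    measure_mono hsub
                _ = ENNReal.ofReal ((ρ * (2:ℝ) ^ (-(k:ℝ))) ^
                      Module.finrank ℝ (EuclideanSpace ℝ (Fin N))) * V :=
                    Measure.addHaar_ball _ _ hρk'.le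
                _ = _ := by rw [finrank_euclideanSpace_fin]
          _ = (ENNReal.ofReal (ρ ^ ((N:ℝ)+s) * (2:ℝ) ^ (-s)) * V) * r0 ^ k := by
              rw [← mul_assoc, ← ENNReal.ofReal_mul (Real.rpow_nonneg hρk.le _)]
              have idk : (ρ * (2:ℝ) ^ (-((k:ℝ)+1))) ^ s * (ρ * (2:ℝ) ^ (-(k:ℝ))) ^ N
                  = (ρ ^ ((N:ℝ)+s) * (2:ℝ) ^ (-s)) * ((2:ℝ) ^ (-((N:ℝ)+s))) ^ k := by
                rw [← Real.rpow_natCast (ρ * (2:ℝ) ^ (-(k:ℝ))) N, rpow_helper2' hρ,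
                  ← Real.rpow_natCast ((2:ℝ) ^ (-((N:ℝ)+s))) k, ← Real.rpow_mul h2.le,
                  mul_assoc, ← Real.rpow_add h2,
                  show s + (N:ℝ) = (N:ℝ) + s by ring,
                  show -((k:ℝ)+1) * s + -(k:ℝ) * (N:ℝ) = -s + -((N:ℝ)+s) * (k:ℝ) by ring]
              rw [idk, ENNReal.ofReal_mul (by positivity),
                ENNReal.ofReal_pow (Real.rpow_nonneg h2.le _), ← hr0def]
              ring
    _ = (ENNReal.ofReal (ρ ^ ((N:ℝ)+s) * (2:ℝ) ^ (-s)) * V) * (1 - r0)⁻¹ := by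
        rw [ENNReal.tsum_mul_left, ENNReal.tsum_geometric]
    _ = (ENNReal.ofReal ((2:ℝ) ^ (-s)) * V * (1 - r0)⁻¹) * ENNReal.ofReal (ρ ^ ((N:ℝ)+s)) := by
        rw [ENNReal.ofReal_mul (Real.rpow_nonneg hρ.le _)]
        ring

private lemma lint_compl_ball_le' (N : ℕ) (hN : 0 < N) {s : ℝ} (hsN : s < -(N:ℝ)) :
    ∃ C : ENNReal, C ≠ ⊤ ∧ ∀ ρ : ℝ, 0 < ρ →
      (∫⁻ y in (ball (0 : EuclideanSpace ℝ (Fin N)) ρ)ᶜ, ENNReal.ofReal (‖y‖ ^ s))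
        ≤ C * ENNReal.ofReal (ρ ^ ((N:ℝ) + s)) := by
  haveI : Nonempty (Fin N) := ⟨⟨0, hN⟩⟩
  have h2 : (0:ℝ) < 2 := two_pos
  set V := (volume : Measure (EuclideanSpace ℝ (Fin N))) (ball 0 1) with hV
  have hVtop : V ≠ ⊤ := measure_ball_lt_top.ne
  set r0 : ENNReal := ENNReal.ofReal ((2:ℝ) ^ ((N:ℝ) + s)) with hr0def
  have hNs : (N:ℝ) + s < 0 := by linarith
  have hs0 : s ≤ 0 := by
    have : (0:ℝ) ≤ N := Nat.cast_nonneg N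
    linarith
  have hr0 : r0 < 1 := by
    rw [hr0def, ENNReal.ofReal_lt_one]
    exact Real.rpow_lt_one_of_one_lt_of_neg one_lt_two hNs
  have hgeom : (1 - r0)⁻¹ ≠ ⊤ := by
    rw [ENNReal.inv_ne_top]
    exact (tsub_pos_of_lt hr0).ne'
  refine ⟨ENNReal.ofReal ((2:ℝ) ^ (N:ℝ)) * V * (1 - r0)⁻¹,
    ENNReal.mul_ne_top (ENNReal.mul_ne_top ENNReal.ofReal_ne_top hVtop) hgeom, fun ρ hρ => ?_⟩
  set A : ℕ → Set (EuclideanSpace ℝ (Fin N)) := fun k =>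
    {y | ρ * (2:ℝ) ^ (k:ℝ) ≤ ‖y‖ ∧ ‖y‖ < ρ * (2:ℝ) ^ ((k:ℝ) + 1)} with hA
  have hmeasA : ∀ k, MeasurableSet (A k) := fun k =>
    (measurableSet_le measurable_const measurable_norm).inter
      (measurableSet_lt measurable_norm measurable_const)
  have hcover : (ball (0 : EuclideanSpace ℝ (Fin N)) ρ)ᶜ ⊆ ⋃ k, A k := by
    intro y hy
    have hy1 : ρ ≤ ‖y‖ := by
      have := mem_ball_zero_iff.not.mp hy
      linarith [not_lt.mp this]
    have hex : ∃ n : ℕ, ‖y‖ < ρ * (2:ℝ) ^ ((n:ℝ) + 1) := by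
      obtain ⟨n, hn⟩ := pow_unbounded_of_one_lt (‖y‖ / ρ) (one_lt_two (α := ℝ))
      refine ⟨n, ?_⟩
      have h1 : (2:ℝ) ^ (n:ℕ) = (2:ℝ) ^ (n:ℝ) := (Real.rpow_natCast 2 n).symm
      have h3 : (2:ℝ) ^ (n:ℝ) ≤ (2:ℝ) ^ ((n:ℝ)+1) :=
        Real.rpow_le_rpow_of_exponent_le one_le_two (by linarith)
      have h4 : ‖y‖ < ρ * (2:ℝ) ^ (n:ℕ) := by
        rw [div_lt_iff₀ hρ] at hn
        linarith [hn]
      rw [h1] at h4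
      nlinarith
    have hup : ‖y‖ < ρ * (2:ℝ) ^ ((Nat.find hex : ℝ) + 1) := Nat.find_spec hex
    have hlow : ρ * (2:ℝ) ^ ((Nat.find hex : ℝ)) ≤ ‖y‖ := by
      rcases Nat.eq_zero_or_pos (Nat.find hex) with h0 | h0
      · rw [h0]; simpa using hy1
      · have hm := Nat.find_min hex (show Nat.find hex - 1 < Nat.find hex from Nat.sub_lt h0 one_pos)
        push_neg at hm
        have hcast : ((Nat.find hex - 1 : ℕ) : ℝ) + 1 = (Nat.find hex : ℝ) := by
          rw [Nat.cast_sub h0]; push_cast; ring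
        rwa [hcast] at hm
    exact mem_iUnion.mpr ⟨Nat.find hex, hlow, hup⟩
  calc ∫⁻ y in (ball (0 : EuclideanSpace ℝ (Fin N)) ρ)ᶜ, ENNReal.ofReal (‖y‖ ^ s)
      ≤ ∫⁻ y in ⋃ k, A k, ENNReal.ofReal (‖y‖ ^ s) := lintegral_mono_set hcover
    _ ≤ ∑' k, ∫⁻ y in A k, ENNReal.ofReal (‖y‖ ^ s) := lintegral_iUnion_le _ _
    _ ≤ ∑' k, (ENNReal.ofReal (ρ ^ ((N:ℝ)+s) * (2:ℝ) ^ (N:ℝ)) * V) * r0 ^ k := by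
        refine ENNReal.tsum_le_tsum fun k => ?_
        have hρk : 0 < ρ * (2:ℝ) ^ (k:ℝ) := mul_pos hρ (Real.rpow_pos_of_pos h2 _)
        have hρk' : 0 < ρ * (2:ℝ) ^ ((k:ℝ)+1) := mul_pos hρ (Real.rpow_pos_of_pos h2 _)
        calc ∫⁻ y in A k, ENNReal.ofReal (‖y‖ ^ s)
            ≤ ∫⁻ _ in A k, ENNReal.ofReal ((ρ * (2:ℝ) ^ (k:ℝ)) ^ s) := by
              refine setLIntegral_mono' (hmeasA k) fun y hy => ?_
              exact ENNReal.ofReal_le_ofReal (Real.rpow_le_rpow_of_nonpos hρk hy.1 hs0)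
          _ = ENNReal.ofReal ((ρ * (2:ℝ) ^ (k:ℝ)) ^ s) * volume (A k) :=
              setLIntegral_const _ _
          _ ≤ ENNReal.ofReal ((ρ * (2:ℝ) ^ (k:ℝ)) ^ s) *
              (ENNReal.ofReal ((ρ * (2:ℝ) ^ ((k:ℝ)+1)) ^ N) * V) := by
              gcongr
              have hsub : A k ⊆ ball 0 (ρ * (2:ℝ) ^ ((k:ℝ)+1)) := fun y hy =>
                mem_ball_zero_iff.mpr hy.2
              calc volume (A k)
                  ≤ volume (ball (0:EuclideanSpace ℝ (Fin N)) (ρ * (2:ℝ) ^ ((k:ℝ)+1))) :=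
                    measure_mono hsub
                _ = ENNReal.ofReal ((ρ * (2:ℝ) ^ ((k:ℝ)+1)) ^
                      Module.finrank ℝ (EuclideanSpace ℝ (Fin N))) * V :=
                    Measure.addHaar_ball _ _ hρk'.le
                _ = _ := by rw [finrank_euclideanSpace_fin]
          _ = (ENNReal.ofReal (ρ ^ ((N:ℝ)+s) * (2:ℝ) ^ (N:ℝ)) * V) * r0 ^ k := by
              rw [← mul_assoc, ← ENNReal.ofReal_mul (Real.rpow_nonneg hρk.le _)]
              have idk : (ρ * (2:ℝ) ^ (k:ℝ)) ^ s * (ρ * (2:ℝ) ^ ((k:ℝ)+1)) ^ N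
                  = (ρ ^ ((N:ℝ)+s) * (2:ℝ) ^ (N:ℝ)) * ((2:ℝ) ^ ((N:ℝ)+s)) ^ k := by
                rw [← Real.rpow_natCast (ρ * (2:ℝ) ^ ((k:ℝ)+1)) N, rpow_helper2' hρ,
                  ← Real.rpow_natCast ((2:ℝ) ^ ((N:ℝ)+s)) k, ← Real.rpow_mul h2.le,
                  mul_assoc, ← Real.rpow_add h2,
                  show s + (N:ℝ) = (N:ℝ) + s by ring,
                  show (k:ℝ) * s + ((k:ℝ)+1) * (N:ℝ) = (N:ℝ) + ((N:ℝ)+s) * (k:ℝ) by ring]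
              rw [idk, ENNReal.ofReal_mul (by positivity),
                ENNReal.ofReal_pow (Real.rpow_nonneg h2.le _), ← hr0def]
              ring
    _ = (ENNReal.ofReal (ρ ^ ((N:ℝ)+s) * (2:ℝ) ^ (N:ℝ)) * V) * (1 - r0)⁻¹ := by
        rw [ENNReal.tsum_mul_left, ENNReal.tsum_geometric]
    _ = (ENNReal.ofReal ((2:ℝ) ^ (N:ℝ)) * V * (1 - r0)⁻¹) * ENNReal.ofReal (ρ ^ ((N:ℝ)+s)) := by
        rw [ENNReal.ofReal_mul (Real.rpow_nonneg hρ.le _)]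
        ring

private lemma lint_ball_shift' (N : ℕ) (x : EuclideanSpace ℝ (Fin N)) (ρ a : ℝ) :
    (∫⁻ y in ball x ρ, ENNReal.ofReal (‖x - y‖ ^ a))
      = ∫⁻ z in ball (0 : EuclideanSpace ℝ (Fin N)) ρ, ENNReal.ofReal (‖z‖ ^ a) := by
  have hrp : Measurable fun z : ℝ => z ^ a := by measurability
  have hf : Measurable fun z : EuclideanSpace ℝ (Fin N) => ENNReal.ofReal (‖z‖ ^ a) :=
    (hrp.comp measurable_norm).ennreal_ofReal
  have hmb : MeasurableSet (ball (0 : EuclideanSpace ℝ (Fin N)) ρ) := measurableSet_ball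
  have hmem : ∀ y : EuclideanSpace ℝ (Fin N),
      y ∈ ball x ρ ↔ x - y ∈ ball (0 : EuclideanSpace ℝ (Fin N)) ρ := fun y => by
    rw [mem_ball, mem_ball_zero_iff, dist_eq_norm, norm_sub_rev]
  rw [← lintegral_indicator measurableSet_ball _, ← lintegral_indicator hmb _,
    ← (Measure.measurePreserving_sub_left
        (volume : Measure (EuclideanSpace ℝ (Fin N))) x).lintegral_comp (hf.indicator hmb)]
  refine lintegral_congr fun y => ?_
  by_cases hy : y ∈ ball x ρ
  · rw [indicator_of_mem hy, indicator_of_mem ((hmem y).mp hy)]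
  · rw [indicator_of_notMem hy, indicator_of_notMem (fun h => hy ((hmem y).mpr h))]

set_option maxHeartbeats 1000000 in
/-- The integral estimate (5.11) from the proof of Theorem F (weak singularities). -/
theorem stmt_8 (N : ℕ) (hN : 3 ≤ N) (μ α q : ℝ)
    (hμ : μ ∈ Set.Ioc (0:ℝ) (1/4)) (hα : α = 1/2 + Real.sqrt (1/4 - μ))
    (hq1 : 1 < q) (hq2 : q < ((N : ℝ) + α) / ((N : ℝ) + α - 1))
    (R₁ : ℝ) (hR₁ : 0 < R₁) :
    ∃ c : ℝ, 0 < c ∧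
      ∀ Ω : Set (EuclideanSpace ℝ (Fin N)), MeasurableSet Ω → Ω ⊆ Metric.ball 0 R₁ →
        ∀ x ∈ Ω, x ≠ 0 →
          ∫ y in Ω, ‖x - y‖ ^ (2 - (N : ℝ) - 2 * α) * ‖y‖ ^ (α - ((N : ℝ) + α - 1) * q)
            ≤ c * ‖x‖ ^ (2 - α - ((N : ℝ) + α - 1) * q) := by
  have hα1 : 1/2 ≤ α := by
    rw [hα]; nlinarith [Real.sqrt_nonneg (1/4 - μ)]
  have hα2 : α < 1 := by
    have hs : Real.sqrt (1/4 - μ) < 1/2 := by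
      rw [show (1:ℝ)/2 = Real.sqrt (1/4) by
        rw [show (1:ℝ)/4 = (1/2)^2 by norm_num, Real.sqrt_sq (by norm_num)]]
      exact Real.sqrt_lt_sqrt (by linarith [hμ.2]) (by linarith [hμ.1])
    rw [hα]; linarith
  have hN3 : (3:ℝ) ≤ (N:ℝ) := by exact_mod_cast hN
  have hden : 0 < (N:ℝ) + α - 1 := by linarith
  have hX1 : ((N:ℝ) + α - 1) * q < (N:ℝ) + α := by
    have := mul_lt_mul_of_pos_left hq2 hden
    rwa [mul_div_cancel₀ _ hden.ne'] at this
  have hX2 : (N:ℝ) + α - 1 < ((N:ℝ) + α - 1) * q := by nlinarith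
  set p := 2 - (N:ℝ) - 2*α with hp
  set t := α - ((N:ℝ) + α - 1)*q with ht
  have hp0 : p < 0 := by rw [hp]; linarith
  have hpN : -(N:ℝ) < p := by rw [hp]; linarith
  have ht0 : t < 0 := by rw [ht]; linarith
  have htN : -(N:ℝ) < t := by rw [ht]; linarith
  have hptN : p + t < -(N:ℝ) := by rw [hp, ht]; linarith
  obtain ⟨Ct, hCt, hCt'⟩ := lint_ball_le' N (by omega) htN ht0.le
  obtain ⟨Cp, hCp, hCp'⟩ := lint_ball_le' N (by omega) hpN hp0.le
  obtain ⟨Cpt, hCpt, hCpt'⟩ := lint_compl_ball_le' N (by omega) hptN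
  set K := Ct + Cp + ENNReal.ofReal ((3:ℝ) ^ (-p)) * Cpt with hK
  have hKtop : K ≠ ⊤ := by
    rw [hK]
    exact ENNReal.add_ne_top.mpr ⟨ENNReal.add_ne_top.mpr ⟨hCt, hCp⟩,
      ENNReal.mul_ne_top ENNReal.ofReal_ne_top hCpt⟩
  set e := (N:ℝ) + (p + t) with he
  refine ⟨K.toReal * (2⁻¹:ℝ) ^ e + 1, by positivity, ?_⟩
  intro Ω hΩmeas hΩsub x hxΩ hx0
  have hee : 2 - α - ((N:ℝ) + α - 1) * q = e := by rw [he, hp, ht]; ring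
  rw [hee]
  set r := ‖x‖ with hr
  have hr0 : 0 < r := norm_pos_iff.mpr hx0
  have hhalf : 0 < r/2 := by linarith
  have hfnn : ∀ y : EuclideanSpace ℝ (Fin N), 0 ≤ ‖x - y‖ ^ p * ‖y‖ ^ t := fun y =>
    mul_nonneg (Real.rpow_nonneg (norm_nonneg _) _) (Real.rpow_nonneg (norm_nonneg _) _)
  have hrp : ∀ s : ℝ, Measurable fun z : ℝ => z ^ s := fun s => by measurability
  have hfmeas : Measurable fun y : EuclideanSpace ℝ (Fin N) => ‖x - y‖ ^ p * ‖y‖ ^ t :=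
    ((hrp p).comp ((measurable_const.sub measurable_id).norm)).mul ((hrp t).comp measurable_norm)
  rw [MeasureTheory.integral_eq_lintegral_of_nonneg_ae
    (Filter.Eventually.of_forall hfnn) hfmeas.aestronglyMeasurable]
  set B1 := ball (0 : EuclideanSpace ℝ (Fin N)) (r/2) with hB1
  set B2 := ball x (r/2) with hB2
  have hofReal : ∀ y : EuclideanSpace ℝ (Fin N), ENNReal.ofReal (‖x - y‖ ^ p * ‖y‖ ^ t)
      = ENNReal.ofReal (‖x - y‖ ^ p) * ENNReal.ofReal (‖y‖ ^ t) := fun y =>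
    ENNReal.ofReal_mul (Real.rpow_nonneg (norm_nonneg _) _)
  have hI1 : (∫⁻ y in B1, ENNReal.ofReal (‖x - y‖ ^ p * ‖y‖ ^ t))
      ≤ Ct * ENNReal.ofReal ((r/2) ^ e) := by
    have hpt : ∀ y ∈ B1, ENNReal.ofReal (‖x - y‖ ^ p * ‖y‖ ^ t)
        ≤ ENNReal.ofReal ((r/2) ^ p) * ENNReal.ofReal (‖y‖ ^ t) := by
      intro y hy
      rw [hofReal y]
      refine mul_le_mul_left (ENNReal.ofReal_le_ofReal ?_) _
      have hy1 : ‖y‖ < r/2 := mem_ball_zero_iff.mp hy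
      have hy2 : r/2 ≤ ‖x - y‖ := by
        have h5 : ‖x‖ - ‖y‖ ≤ ‖x - y‖ := norm_sub_norm_le x y
        linarith
      exact Real.rpow_le_rpow_of_nonpos hhalf hy2 hp0.le
    calc (∫⁻ y in B1, ENNReal.ofReal (‖x - y‖ ^ p * ‖y‖ ^ t))
        ≤ ∫⁻ y in B1, ENNReal.ofReal ((r/2) ^ p) * ENNReal.ofReal (‖y‖ ^ t) :=
          setLIntegral_mono' measurableSet_ball hpt
      _ = ENNReal.ofReal ((r/2) ^ p) * ∫⁻ y in B1, ENNReal.ofReal (‖y‖ ^ t) :=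
          lintegral_const_mul' _ _ ENNReal.ofReal_ne_top
      _ ≤ ENNReal.ofReal ((r/2) ^ p) * (Ct * ENNReal.ofReal ((r/2) ^ ((N:ℝ) + t))) := by
          gcongr
          exact hCt' (r/2) hhalf
      _ = Ct * ENNReal.ofReal ((r/2) ^ e) := by
          rw [← mul_assoc, mul_comm (ENNReal.ofReal ((r/2) ^ p)) Ct, mul_assoc,
            ← ENNReal.ofReal_mul (Real.rpow_nonneg hhalf.le _), ← Real.rpow_add hhalf,
            show p + ((N:ℝ) + t) = e by rw [he]; ring]
  have hI2 : (∫⁻ y in B2, ENNReal.ofReal (‖x - y‖ ^ p * ‖y‖ ^ t))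
      ≤ Cp * ENNReal.ofReal ((r/2) ^ e) := by
    have hpt : ∀ y ∈ B2, ENNReal.ofReal (‖x - y‖ ^ p * ‖y‖ ^ t)
        ≤ ENNReal.ofReal ((r/2) ^ t) * ENNReal.ofReal (‖x - y‖ ^ p) := by
      intro y hy
      rw [hofReal y, mul_comm]
      refine mul_le_mul_left (ENNReal.ofReal_le_ofReal ?_) _
      have hy1 : ‖x - y‖ < r/2 := by
        rw [hB2, mem_ball, dist_eq_norm] at hy
        rw [norm_sub_rev]
        exact hy
      have hy2 : r/2 ≤ ‖y‖ := by
        have h5 : ‖x‖ - ‖y‖ ≤ ‖x - y‖ := norm_sub_norm_le x y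
        linarith
      exact Real.rpow_le_rpow_of_nonpos hhalf hy2 ht0.le
    calc (∫⁻ y in B2, ENNReal.ofReal (‖x - y‖ ^ p * ‖y‖ ^ t))
        ≤ ∫⁻ y in B2, ENNReal.ofReal ((r/2) ^ t) * ENNReal.ofReal (‖x - y‖ ^ p) :=
          setLIntegral_mono' measurableSet_ball hpt
      _ = ENNReal.ofReal ((r/2) ^ t) * ∫⁻ y in B2, ENNReal.ofReal (‖x - y‖ ^ p) :=
          lintegral_const_mul' _ _ ENNReal.ofReal_ne_top
      _ = ENNReal.ofReal ((r/2) ^ t) *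
          ∫⁻ z in ball (0 : EuclideanSpace ℝ (Fin N)) (r/2), ENNReal.ofReal (‖z‖ ^ p) := by
          rw [hB2, lint_ball_shift']
      _ ≤ ENNReal.ofReal ((r/2) ^ t) * (Cp * ENNReal.ofReal ((r/2) ^ ((N:ℝ) + p))) := by
          gcongr
          exact hCp' (r/2) hhalf
      _ = Cp * ENNReal.ofReal ((r/2) ^ e) := by
          rw [← mul_assoc, mul_comm (ENNReal.ofReal ((r/2) ^ t)) Cp, mul_assoc,
            ← ENNReal.ofReal_mul (Real.rpow_nonneg hhalf.le _), ← Real.rpow_add hhalf,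
            show t + ((N:ℝ) + p) = e by rw [he]; ring]
  have hI3 : (∫⁻ y in (B1 ∪ B2)ᶜ, ENNReal.ofReal (‖x - y‖ ^ p * ‖y‖ ^ t))
      ≤ ENNReal.ofReal ((3:ℝ) ^ (-p)) * Cpt * ENNReal.ofReal ((r/2) ^ e) := by
    have hpt : ∀ y ∈ (B1 ∪ B2)ᶜ, ENNReal.ofReal (‖x - y‖ ^ p * ‖y‖ ^ t)
        ≤ ENNReal.ofReal ((3:ℝ) ^ (-p)) * ENNReal.ofReal (‖y‖ ^ (p + t)) := by
      intro y hy
      rw [mem_compl_iff, mem_union] at hy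
      push_neg at hy
      have hy1 : r/2 ≤ ‖y‖ := not_lt.mp fun h => hy.1 (mem_ball_zero_iff.mpr h)
      have hy2 : r/2 ≤ ‖x - y‖ := by
        refine not_lt.mp fun h => hy.2 ?_
        rw [hB2, mem_ball, dist_eq_norm, norm_sub_rev]
        exact h
      have hy0 : 0 < ‖y‖ := lt_of_lt_of_le hhalf hy1
      have h5 : ‖y‖ - ‖x‖ ≤ ‖y - x‖ := norm_sub_norm_le y x
      have h6 : ‖y - x‖ = ‖x - y‖ := norm_sub_rev y x
      have h7 : ‖y‖ / 3 ≤ ‖x - y‖ := by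
        rw [h6] at h5
        rw [← hr] at h5
        linarith
      have h8 : ‖x - y‖ ^ p ≤ (‖y‖/3) ^ p :=
        Real.rpow_le_rpow_of_nonpos (by positivity) h7 hp0.le
      have h9 : (‖y‖/3) ^ p = (3:ℝ) ^ (-p) * ‖y‖ ^ p := by
        rw [Real.div_rpow (norm_nonneg y) (by norm_num), Real.rpow_neg (by norm_num : (0:ℝ) ≤ 3),
          div_eq_mul_inv, mul_comm]
      have h10 : ‖x - y‖ ^ p * ‖y‖ ^ t ≤ (3:ℝ) ^ (-p) * ‖y‖ ^ (p + t) := by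
        have h11 := mul_le_mul_of_nonneg_right h8 (Real.rpow_nonneg (norm_nonneg y) t)
        rw [h9] at h11
        calc ‖x - y‖ ^ p * ‖y‖ ^ t ≤ (3:ℝ) ^ (-p) * ‖y‖ ^ p * ‖y‖ ^ t := h11
          _ = (3:ℝ) ^ (-p) * ‖y‖ ^ (p + t) := by rw [mul_assoc, ← Real.rpow_add hy0]
      calc ENNReal.ofReal (‖x - y‖ ^ p * ‖y‖ ^ t)
          ≤ ENNReal.ofReal ((3:ℝ) ^ (-p) * ‖y‖ ^ (p + t)) := ENNReal.ofReal_le_ofReal h10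
        _ = ENNReal.ofReal ((3:ℝ) ^ (-p)) * ENNReal.ofReal (‖y‖ ^ (p + t)) :=
            ENNReal.ofReal_mul (Real.rpow_nonneg (by norm_num) _)
    calc (∫⁻ y in (B1 ∪ B2)ᶜ, ENNReal.ofReal (‖x - y‖ ^ p * ‖y‖ ^ t))
        ≤ ∫⁻ y in (B1 ∪ B2)ᶜ, ENNReal.ofReal ((3:ℝ) ^ (-p)) * ENNReal.ofReal (‖y‖ ^ (p + t)) :=
          setLIntegral_mono' (measurableSet_ball.union measurableSet_ball).compl hpt
      _ = ENNReal.ofReal ((3:ℝ) ^ (-p)) * ∫⁻ y in (B1 ∪ B2)ᶜ, ENNReal.ofReal (‖y‖ ^ (p + t)) :=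
          lintegral_const_mul' _ _ ENNReal.ofReal_ne_top
      _ ≤ ENNReal.ofReal ((3:ℝ) ^ (-p)) * ∫⁻ y in B1ᶜ, ENNReal.ofReal (‖y‖ ^ (p + t)) := by
          gcongr
          exact subset_union_left
      _ ≤ ENNReal.ofReal ((3:ℝ) ^ (-p)) * (Cpt * ENNReal.ofReal ((r/2) ^ ((N:ℝ) + (p + t)))) := by
          gcongr
          exact hCpt' (r/2) hhalf
      _ = ENNReal.ofReal ((3:ℝ) ^ (-p)) * Cpt * ENNReal.ofReal ((r/2) ^ e) := by
          rw [mul_assoc, he]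
  have hkey : (∫⁻ y in Ω, ENNReal.ofReal (‖x - y‖ ^ p * ‖y‖ ^ t))
      ≤ K * ENNReal.ofReal ((r/2) ^ e) := by
    have hcover : Ω ⊆ B1 ∪ (B2 ∪ (B1 ∪ B2)ᶜ) := by
      rw [← union_assoc, union_compl_self]
      exact subset_univ Ω
    calc (∫⁻ y in Ω, ENNReal.ofReal (‖x - y‖ ^ p * ‖y‖ ^ t))
        ≤ ∫⁻ y in B1 ∪ (B2 ∪ (B1 ∪ B2)ᶜ), ENNReal.ofReal (‖x - y‖ ^ p * ‖y‖ ^ t) :=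
          lintegral_mono_set hcover
      _ ≤ (∫⁻ y in B1, ENNReal.ofReal (‖x - y‖ ^ p * ‖y‖ ^ t))
          + ∫⁻ y in B2 ∪ (B1 ∪ B2)ᶜ, ENNReal.ofReal (‖x - y‖ ^ p * ‖y‖ ^ t) :=
          lintegral_union_le _ _ _
      _ ≤ (∫⁻ y in B1, ENNReal.ofReal (‖x - y‖ ^ p * ‖y‖ ^ t))
          + ((∫⁻ y in B2, ENNReal.ofReal (‖x - y‖ ^ p * ‖y‖ ^ t))
            + ∫⁻ y in (B1 ∪ B2)ᶜ, ENNReal.ofReal (‖x - y‖ ^ p * ‖y‖ ^ t)) :=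
          add_le_add le_rfl (lintegral_union_le _ _ _)
      _ ≤ Ct * ENNReal.ofReal ((r/2) ^ e)
          + (Cp * ENNReal.ofReal ((r/2) ^ e)
            + ENNReal.ofReal ((3:ℝ) ^ (-p)) * Cpt * ENNReal.ofReal ((r/2) ^ e)) :=
          add_le_add hI1 (add_le_add hI2 hI3)
      _ = K * ENNReal.ofReal ((r/2) ^ e) := by rw [hK]; ring
  have hfin : K * ENNReal.ofReal ((r/2) ^ e) ≠ ⊤ :=
    ENNReal.mul_ne_top hKtop ENNReal.ofReal_ne_top
  have hmono := ENNReal.toReal_mono hfin hkey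
  rw [ENNReal.toReal_mul, ENNReal.toReal_ofReal (Real.rpow_nonneg hhalf.le _)] at hmono
  have hsplit : ((r:ℝ)/2) ^ e = (2⁻¹:ℝ) ^ e * r ^ e := by
    rw [div_eq_mul_inv, mul_comm r, Real.mul_rpow (by norm_num) hr0.le]
  have hre : (0:ℝ) < r ^ e := Real.rpow_pos_of_pos hr0 _
  rw [hsplit] at hmono
  nlinarith [ENNReal.toReal_nonneg (a := K)]
end

section
/- Let N ≥ 3 be an integer, μ ∈ (0,1/4], α := 1/2 + √(1/4 − μ), and let q satisfy 1 < q < (N+α)/(N+α−1). For every R₁ > 0 there exists a constant c > 0 depending only on N, μ, q and R₁ such that for every measurable set Ω ⊆ B(0,R₁) ⊂ ℝ^N and every x ∈ Ω with x ≠ 0: ∫_Ω |x−y|^{1−N−α}·|y|^{1−(N+α−1)q} dy ≤ c·|x|^{2−α−(N+α−1)q}. -/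
open MeasureTheory Metric Set Module
open scoped ENNReal

noncomputable section AuxStmt9

namespace AuxStmt9

variable {E : Type*} [NormedAddCommGroup E] [NormedSpace ℝ E] [MeasurableSpace E]
  [BorelSpace E] [FiniteDimensional ℝ E] [Nontrivial E]
  (ν : Measure E) [ν.IsAddHaarMeasure]

lemma lintegral_fun_norm (f : ℝ → ℝ≥0∞) (hf : Measurable f) :
    ∫⁻ x, f ‖x‖ ∂ν
      = ν.toSphere univ
        * ∫⁻ y in Ioi (0:ℝ), ENNReal.ofReal (y ^ (finrank ℝ E - 1)) * f y := by
  have h1 : ∫⁻ x, f ‖x‖ ∂ν = ∫⁻ x : ({(0:E)}ᶜ : Set E), f ‖x.1‖ ∂(ν.comap (↑)) := by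
    rw [lintegral_subtype_comap (measurableSet_singleton (0:E)).compl (fun x => f ‖x‖),
      MeasureTheory.restrict_compl_singleton (0:E)]
  have h2 : ∫⁻ x : ({(0:E)}ᶜ : Set E), f ‖x.1‖ ∂(ν.comap (↑))
      = ∫⁻ p : sphere (0:E) 1 × Ioi (0:ℝ), f p.2
          ∂(ν.toSphere.prod (.volumeIoiPow (finrank ℝ E - 1))) := by
    rw [← ν.measurePreserving_homeomorphUnitSphereProd.lintegral_comp
      (show Measurable fun p : sphere (0:E) 1 × Ioi (0:ℝ) => f ↑p.2 from
        hf.comp (measurable_subtype_coe.comp measurable_snd))]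
    exact lintegral_congr fun x => by simp
  have h3 : ∫⁻ p : sphere (0:E) 1 × Ioi (0:ℝ), f p.2
        ∂(ν.toSphere.prod (.volumeIoiPow (finrank ℝ E - 1)))
      = ν.toSphere univ * ∫⁻ y : Ioi (0:ℝ), f y ∂(Measure.volumeIoiPow (finrank ℝ E - 1)) := by
    rw [lintegral_prod _
      (show Measurable fun p : sphere (0:E) 1 × Ioi (0:ℝ) => f ↑p.2 from
        hf.comp (measurable_subtype_coe.comp measurable_snd)).aemeasurable]
    simp [lintegral_const, mul_comm]
  have h4 : ∫⁻ y : Ioi (0:ℝ), f y ∂(Measure.volumeIoiPow (finrank ℝ E - 1))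
      = ∫⁻ y in Ioi (0:ℝ), ENNReal.ofReal (y ^ (finrank ℝ E - 1)) * f y := by
    rw [Measure.volumeIoiPow, lintegral_withDensity_eq_lintegral_mul _
      (show Measurable fun r : Ioi (0:ℝ) => ENNReal.ofReal (↑r ^ (finrank ℝ E - 1)) from
        (measurable_subtype_coe.pow_const _).ennreal_ofReal)
      (show Measurable fun y : Ioi (0:ℝ) => f ↑y from hf.comp measurable_subtype_coe)]
    rw [show (fun a : Ioi (0:ℝ) => ((fun r : Ioi (0:ℝ) => ENNReal.ofReal (↑r ^ (finrank ℝ E - 1))) *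
        fun y : Ioi (0:ℝ) => f ↑y) a)
      = fun a : Ioi (0:ℝ) => (fun y : ℝ => ENNReal.ofReal (y ^ (finrank ℝ E - 1)) * f y) ↑a from rfl]
    exact lintegral_subtype_comap measurableSet_Ioi
      (fun y : ℝ => ENNReal.ofReal (y ^ (finrank ℝ E - 1)) * f y)
  rw [h1, h2, h3, h4]


lemma lintegral_ball {r s : ℝ} (hr : 0 < r) (hsN : -(finrank ℝ E : ℝ) < s) (hs0 : s < 0) :
    ∫⁻ y in ball (0:E) r, ENNReal.ofReal (‖y‖ ^ s) ∂ν
      = ν.toSphere univ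
        * ENNReal.ofReal (r ^ ((finrank ℝ E : ℝ) + s) / ((finrank ℝ E : ℝ) + s)) := by
  have hn : 1 ≤ finrank ℝ E := Module.finrank_pos
  set n := finrank ℝ E with hn'
  have hcast : ((n - 1 : ℕ) : ℝ) = (n:ℝ) - 1 := by
    rw [Nat.cast_sub hn]; norm_num
  have hnR : (1:ℝ) ≤ (n:ℝ) := by exact_mod_cast hn
  have hp : (-1:ℝ) < (n:ℝ) - 1 + s := by linarith
  have hmf : Measurable fun t : ℝ => ENNReal.ofReal (t ^ s) :=
    (by fun_prop : Measurable fun t : ℝ => t ^ s).ennreal_ofReal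
  have hfun : ∀ x : E, (Ioo (0:ℝ) r).indicator (fun t => ENNReal.ofReal (t ^ s)) ‖x‖
      = (ball (0:E) r).indicator (fun y => ENNReal.ofReal (‖y‖ ^ s)) x := by
    intro x
    rcases eq_or_ne x 0 with rfl | hx
    · rw [indicator_of_notMem (by simp : ¬ ‖(0:E)‖ ∈ Ioo (0:ℝ) r),
        indicator_of_mem (mem_ball_self hr)]
      simp [Real.zero_rpow hs0.ne]
    · have h0 : 0 < ‖x‖ := norm_pos_iff.mpr hx
      by_cases hxr : ‖x‖ < r
      · rw [indicator_of_mem (mem_Ioo.mpr ⟨h0, hxr⟩), indicator_of_mem (mem_ball_zero_iff.mpr hxr)]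
      · rw [indicator_of_notMem (fun h => hxr (mem_Ioo.mp h).2),
          indicator_of_notMem (fun h => hxr (mem_ball_zero_iff.mp h))]
  have hint : IntegrableOn (fun y : ℝ => y ^ ((n:ℝ)-1+s)) (Ioo 0 r) := by
    have h1 : IntervalIntegrable (fun y : ℝ => y ^ ((n:ℝ)-1+s)) volume 0 r :=
      intervalIntegral.intervalIntegrable_rpow' hp
    exact ((intervalIntegrable_iff_integrableOn_Ioc_of_le hr.le).mp h1).mono_set
      Ioo_subset_Ioc_self
  calc ∫⁻ y in ball (0:E) r, ENNReal.ofReal (‖y‖ ^ s) ∂ν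
      = ∫⁻ x, (Ioo (0:ℝ) r).indicator (fun t => ENNReal.ofReal (t ^ s)) ‖x‖ ∂ν := by
        rw [← lintegral_indicator measurableSet_ball]
        exact lintegral_congr fun x => (hfun x).symm
    _ = ν.toSphere univ * ∫⁻ y in Ioi (0:ℝ), ENNReal.ofReal (y ^ (n - 1))
          * (Ioo (0:ℝ) r).indicator (fun t => ENNReal.ofReal (t ^ s)) y :=
        lintegral_fun_norm ν _ (hmf.indicator measurableSet_Ioo)
    _ = ν.toSphere univ * ∫⁻ y in Ioo (0:ℝ) r, ENNReal.ofReal (y ^ ((n:ℝ) - 1 + s)) := by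
        congr 1
        rw [setLIntegral_congr_fun measurableSet_Ioi (
          (fun y (hy : y ∈ Ioi (0:ℝ)) => show ENNReal.ofReal (y ^ (n - 1))
              * (Ioo (0:ℝ) r).indicator (fun t => ENNReal.ofReal (t ^ s)) y
            = (Ioo (0:ℝ) r).indicator (fun t => ENNReal.ofReal (t ^ ((n:ℝ) - 1 + s))) y from ?_))]
        · rw [lintegral_indicator measurableSet_Ioo, Measure.restrict_restrict measurableSet_Ioo,
            inter_eq_left.mpr Ioo_subset_Ioi_self]
        · by_cases hyr : y < r
          · rw [indicator_of_mem (mem_Ioo.mpr ⟨hy, hyr⟩), indicator_of_mem (mem_Ioo.mpr ⟨hy, hyr⟩),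
              ← ENNReal.ofReal_mul (pow_nonneg (le_of_lt hy) _)]
            congr 1
            rw [← Real.rpow_natCast y (n-1), hcast, ← Real.rpow_add hy]
          · rw [indicator_of_notMem (fun h => hyr (mem_Ioo.mp h).2),
              indicator_of_notMem (fun h => hyr (mem_Ioo.mp h).2), mul_zero]
    _ = ν.toSphere univ * ENNReal.ofReal (∫ y in Ioo (0:ℝ) r, y ^ ((n:ℝ)-1+s)) := by
        rw [← ofReal_integral_eq_lintegral_ofReal hint]
        filter_upwards [ae_restrict_mem measurableSet_Ioo] with y hy
        exact Real.rpow_nonneg hy.1.le _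
    _ = ν.toSphere univ * ENNReal.ofReal (r ^ ((n:ℝ) + s) / ((n:ℝ) + s)) := by
        congr 2
        rw [← integral_Ioc_eq_integral_Ioo, ← intervalIntegral.integral_of_le hr.le,
          integral_rpow (Or.inl hp),
          Real.zero_rpow (by linarith : (n:ℝ)-1+s+1 ≠ 0),
          show (n:ℝ)-1+s+1 = (n:ℝ)+s by ring, sub_zero]

lemma lintegral_compl_ball {r s : ℝ} (hr : 0 < r) (hsN : s < -(finrank ℝ E : ℝ)) :
    ∫⁻ y in (ball (0:E) r)ᶜ, ENNReal.ofReal (‖y‖ ^ s) ∂ν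
      = ν.toSphere univ
        * ENNReal.ofReal (r ^ ((finrank ℝ E : ℝ) + s) / (-((finrank ℝ E : ℝ) + s))) := by
  have hn : 1 ≤ finrank ℝ E := Module.finrank_pos
  set n := finrank ℝ E with hn'
  have hcast : ((n - 1 : ℕ) : ℝ) = (n:ℝ) - 1 := by
    rw [Nat.cast_sub hn]; norm_num
  have hnR : (1:ℝ) ≤ (n:ℝ) := by exact_mod_cast hn
  have hp : (n:ℝ) - 1 + s < -1 := by linarith
  have hmf : Measurable fun t : ℝ => ENNReal.ofReal (t ^ s) :=
    (by fun_prop : Measurable fun t : ℝ => t ^ s).ennreal_ofReal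
  have hfun : ∀ x : E, (Ici r).indicator (fun t => ENNReal.ofReal (t ^ s)) ‖x‖
      = ((ball (0:E) r)ᶜ).indicator (fun y => ENNReal.ofReal (‖y‖ ^ s)) x := by
    intro x
    by_cases hxr : r ≤ ‖x‖
    · rw [indicator_of_mem (mem_Ici.mpr hxr),
        indicator_of_mem (by simpa [mem_ball_zero_iff] using not_lt.mpr hxr)]
    · rw [indicator_of_notMem (fun h => hxr (mem_Ici.mp h)),
        indicator_of_notMem (by simpa [mem_ball_zero_iff] using not_le.mp hxr)]
  have hint : IntegrableOn (fun y : ℝ => y ^ ((n:ℝ)-1+s)) (Ioi r) :=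
    integrableOn_Ioi_rpow_of_lt hp hr
  calc ∫⁻ y in (ball (0:E) r)ᶜ, ENNReal.ofReal (‖y‖ ^ s) ∂ν
      = ∫⁻ x, (Ici r).indicator (fun t => ENNReal.ofReal (t ^ s)) ‖x‖ ∂ν := by
        rw [← lintegral_indicator measurableSet_ball.compl]
        exact lintegral_congr fun x => (hfun x).symm
    _ = ν.toSphere univ * ∫⁻ y in Ioi (0:ℝ), ENNReal.ofReal (y ^ (n - 1))
          * (Ici r).indicator (fun t => ENNReal.ofReal (t ^ s)) y :=
        lintegral_fun_norm ν _ (hmf.indicator measurableSet_Ici)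
    _ = ν.toSphere univ * ∫⁻ y in Ioi r, ENNReal.ofReal (y ^ ((n:ℝ) - 1 + s)) := by
        congr 1
        rw [setLIntegral_congr_fun measurableSet_Ioi (
          (fun y (hy : y ∈ Ioi (0:ℝ)) => show ENNReal.ofReal (y ^ (n - 1))
              * (Ici r).indicator (fun t => ENNReal.ofReal (t ^ s)) y
            = (Ici r).indicator (fun t => ENNReal.ofReal (t ^ ((n:ℝ) - 1 + s))) y from ?_))]
        · rw [lintegral_indicator measurableSet_Ici, Measure.restrict_restrict measurableSet_Ici,
            inter_eq_left.mpr (show Ici r ⊆ Ioi 0 from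
              fun y hy => mem_Ioi.mpr (lt_of_lt_of_le hr (mem_Ici.mp hy))),
            Measure.restrict_congr_set Ioi_ae_eq_Ici.symm]
        · by_cases hyr : r ≤ y
          · rw [indicator_of_mem (mem_Ici.mpr hyr), indicator_of_mem (mem_Ici.mpr hyr),
              ← ENNReal.ofReal_mul (pow_nonneg (le_of_lt hy) _)]
            congr 1
            rw [← Real.rpow_natCast y (n-1), hcast, ← Real.rpow_add hy]
          · rw [indicator_of_notMem (fun h => hyr (mem_Ici.mp h)),
              indicator_of_notMem (fun h => hyr (mem_Ici.mp h)), mul_zero]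
    _ = ν.toSphere univ * ENNReal.ofReal (∫ y in Ioi r, y ^ ((n:ℝ)-1+s)) := by
        rw [← ofReal_integral_eq_lintegral_ofReal hint]
        filter_upwards [ae_restrict_mem measurableSet_Ioi] with y hy
        exact Real.rpow_nonneg (le_of_lt (lt_trans hr hy)) _
    _ = ν.toSphere univ * ENNReal.ofReal (r ^ ((n:ℝ) + s) / (-((n:ℝ) + s))) := by
        congr 2
        rw [integral_Ioi_rpow_of_lt hp hr, show (n:ℝ)-1+s+1 = (n:ℝ)+s by ring,
          div_neg, neg_div]

end AuxStmt9

set_option maxHeartbeats 1000000 in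
/-- The integral estimate underlying (5.22) (bound for `N(x)`) in Case 2 of the proof of
Theorem F (weak singularities). -/
theorem stmt_9 (N : ℕ) (hN : 3 ≤ N) (μ α q : ℝ)
    (hμ : μ ∈ Set.Ioc (0:ℝ) (1/4)) (hα : α = 1/2 + Real.sqrt (1/4 - μ))
    (hq1 : 1 < q) (hq2 : q < ((N : ℝ) + α) / ((N : ℝ) + α - 1))
    (R₁ : ℝ) (hR₁ : 0 < R₁) :
    ∃ c : ℝ, 0 < c ∧
      ∀ Ω : Set (EuclideanSpace ℝ (Fin N)), MeasurableSet Ω → Ω ⊆ Metric.ball 0 R₁ →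
        ∀ x ∈ Ω, x ≠ 0 →
          ∫ y in Ω, ‖x - y‖ ^ (1 - (N : ℝ) - α) * ‖y‖ ^ (1 - ((N : ℝ) + α - 1) * q)
            ≤ c * ‖x‖ ^ (2 - α - ((N : ℝ) + α - 1) * q) := by
  have hα2 : 1/2 ≤ α := by
    rw [hα]; have := Real.sqrt_nonneg (1/4 - μ); linarith
  have hα1 : α < 1 := by
    rw [hα]
    have h1 : Real.sqrt (1/4 - μ) < 1/2 :=
      (Real.sqrt_lt' (by norm_num)).mpr (by nlinarith [hμ.1])
    linarith
  have hN3 : (3:ℝ) ≤ (N:ℝ) := by exact_mod_cast hN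
  have hA : 0 < (N:ℝ) + α - 1 := by linarith
  have hAq : ((N:ℝ) + α - 1) * q < (N:ℝ) + α := by
    have h := (lt_div_iff₀ hA).mp hq2
    linarith
  set a : ℝ := 1 - (N:ℝ) - α with ha_def
  set b : ℝ := 1 - ((N:ℝ) + α - 1) * q with hb_def
  set γ : ℝ := 2 - α - ((N:ℝ) + α - 1) * q with hγ_def
  have ha0 : a < 0 := by rw [ha_def]; linarith
  have haN : -(N:ℝ) < a := by rw [ha_def]; linarith
  have haN' : 0 < (N:ℝ) + a := by linarith
  have hb0 : b < 0 := by rw [hb_def]; nlinarith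
  have hbN : -(N:ℝ) < b := by rw [hb_def]; linarith
  have hbN' : 0 < (N:ℝ) + b := by linarith
  have hγ0 : γ < 0 := by rw [hγ_def]; nlinarith
  have hγab : γ = (N:ℝ) + (a + b) := by rw [hγ_def, ha_def, hb_def]; ring
  have hab : a + b < -(N:ℝ) := by linarith
  haveI : Nontrivial (EuclideanSpace ℝ (Fin N)) := by
    apply nontrivial_of_finrank_pos (R := ℝ)
    rw [finrank_euclideanSpace_fin]; omega
  have hfin : Module.finrank ℝ (EuclideanSpace ℝ (Fin N)) = N := finrank_euclideanSpace_fin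
  set T : ℝ≥0∞ := (volume : Measure (EuclideanSpace ℝ (Fin N))).toSphere univ with hT_def
  have hTne : T ≠ ⊤ := measure_ne_top _ _
  set k1 : ℝ := ((2:ℝ))⁻¹ ^ γ / ((N:ℝ) + a) with hk1_def
  set k2 : ℝ := ((2:ℝ))⁻¹ ^ a * ((2:ℝ) ^ ((N:ℝ) + b) / ((N:ℝ) + b)) with hk2_def
  set k3 : ℝ := ((2:ℝ))⁻¹ ^ a * ((2:ℝ) ^ γ / (-γ)) with hk3_def
  have hk1 : 0 ≤ k1 := div_nonneg (Real.rpow_nonneg (by norm_num) _) haN'.le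
  have hk2 : 0 ≤ k2 := mul_nonneg (Real.rpow_nonneg (by norm_num) _)
    (div_nonneg (Real.rpow_nonneg (by norm_num) _) hbN'.le)
  have hk3 : 0 ≤ k3 := mul_nonneg (Real.rpow_nonneg (by norm_num) _)
    (div_nonneg (Real.rpow_nonneg (by norm_num) _) (neg_pos.mpr hγ0).le)
  refine ⟨T.toReal * (k1 + k2 + k3) + 1, ?_, ?_⟩
  · have h0 : 0 ≤ T.toReal * (k1 + k2 + k3) :=
      mul_nonneg ENNReal.toReal_nonneg (by linarith)
    linarith
  intro Ω hΩmeas hΩsub x hxΩ hx0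
  set ρ : ℝ := ‖x‖ with hρ_def
  have hρ : 0 < ρ := norm_pos_iff.mpr hx0
  have hhalf : 0 < ρ/2 := by linarith
  have h2ρ : 0 < 2*ρ := by linarith
  have hmeas : Measurable fun y : EuclideanSpace ℝ (Fin N) => ‖x - y‖ ^ a * ‖y‖ ^ b := by
    fun_prop
  have hnn : ∀ y : EuclideanSpace ℝ (Fin N), 0 ≤ ‖x - y‖ ^ a * ‖y‖ ^ b := fun y =>
    mul_nonneg (Real.rpow_nonneg (norm_nonneg _) _) (Real.rpow_nonneg (norm_nonneg _) _)
  rw [MeasureTheory.integral_eq_lintegral_of_nonneg_ae (ae_of_all _ hnn)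
    hmeas.aestronglyMeasurable]
  set g : EuclideanSpace ℝ (Fin N) → ℝ≥0∞ :=
    fun y => ENNReal.ofReal (‖x - y‖ ^ a * ‖y‖ ^ b) with hg_def
  -- Region 1 bound
  have hI1 : ∫⁻ y in ball x (ρ/2), g y ≤ T * ENNReal.ofReal (k1 * ρ ^ γ) := by
    have step1 : ∫⁻ y in ball x (ρ/2), g y
        ≤ ∫⁻ y in ball x (ρ/2),
            ENNReal.ofReal ((ρ/2) ^ b) * ENNReal.ofReal (‖x - y‖ ^ a) := by
      refine setLIntegral_mono' measurableSet_ball fun y hy => ?_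
      have hxy : ‖x - y‖ < ρ/2 := by
        rw [show ‖x - y‖ = dist y x from by rw [dist_eq_norm, norm_sub_rev]]
        exact mem_ball.mp hy
      have hy2 : ρ/2 ≤ ‖y‖ := by
        have h1 : ‖x‖ - ‖y‖ ≤ ‖x - y‖ := norm_sub_norm_le x y
        rw [← hρ_def] at h1
        linarith
      have hb' : ‖y‖ ^ b ≤ (ρ/2) ^ b := Real.rpow_le_rpow_of_nonpos hhalf hy2 hb0.le
      simp only [hg_def]
      rw [← ENNReal.ofReal_mul (Real.rpow_nonneg hhalf.le _)]
      refine ENNReal.ofReal_le_ofReal ?_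
      calc ‖x - y‖ ^ a * ‖y‖ ^ b ≤ ‖x - y‖ ^ a * (ρ/2) ^ b :=
            mul_le_mul_of_nonneg_left hb' (Real.rpow_nonneg (norm_nonneg _) _)
        _ = (ρ/2) ^ b * ‖x - y‖ ^ a := mul_comm _ _
    have step2 : ∫⁻ y in ball x (ρ/2), ENNReal.ofReal (‖x - y‖ ^ a)
        = ∫⁻ z in ball (0 : EuclideanSpace ℝ (Fin N)) (ρ/2), ENNReal.ofReal (‖z‖ ^ a) := by
      have hmp : MeasurePreserving (fun z : EuclideanSpace ℝ (Fin N) => x - z) volume volume :=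
        Measure.measurePreserving_sub_left volume x
      have hpre : (fun z : EuclideanSpace ℝ (Fin N) => x - z) ⁻¹' (ball x (ρ/2))
          = ball (0 : EuclideanSpace ℝ (Fin N)) (ρ/2) := by
        ext z
        simp only [mem_preimage, mem_ball, dist_eq_norm, sub_sub_cancel_left, sub_zero, norm_neg]
      have h := hmp.setLIntegral_comp_preimage_emb
        (MeasurableEquiv.subLeft x).measurableEmbedding
        (fun y => ENNReal.ofReal (‖x - y‖ ^ a)) (ball x (ρ/2))
      rw [hpre] at h
      rw [← h]
      refine setLIntegral_congr_fun measurableSet_ball (fun z hz => ?_)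
      simp [sub_sub_cancel]
    have step3 : ∫⁻ z in ball (0 : EuclideanSpace ℝ (Fin N)) (ρ/2), ENNReal.ofReal (‖z‖ ^ a)
        = T * ENNReal.ofReal ((ρ/2) ^ ((N:ℝ) + a) / ((N:ℝ) + a)) := by
      have h := AuxStmt9.lintegral_ball (E := EuclideanSpace ℝ (Fin N)) volume
        (r := ρ/2) (s := a) hhalf (by rw [hfin]; exact haN) ha0
      rwa [hfin] at h
    calc ∫⁻ y in ball x (ρ/2), g y
        ≤ ∫⁻ y in ball x (ρ/2), ENNReal.ofReal ((ρ/2) ^ b) * ENNReal.ofReal (‖x - y‖ ^ a) := step1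
      _ = ENNReal.ofReal ((ρ/2) ^ b) * ∫⁻ y in ball x (ρ/2), ENNReal.ofReal (‖x - y‖ ^ a) :=
          lintegral_const_mul' _ _ ENNReal.ofReal_ne_top
      _ = ENNReal.ofReal ((ρ/2) ^ b)
            * (T * ENNReal.ofReal ((ρ/2) ^ ((N:ℝ) + a) / ((N:ℝ) + a))) := by rw [step2, step3]
      _ = T * ENNReal.ofReal (k1 * ρ ^ γ) := by
          rw [mul_left_comm, ← ENNReal.ofReal_mul (Real.rpow_nonneg hhalf.le _)]
          congr 2
          have h1 : (ρ/2) ^ b * ((ρ/2) ^ ((N:ℝ)+a) / ((N:ℝ)+a))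
              = (ρ/2) ^ γ / ((N:ℝ)+a) := by
            rw [← mul_div_assoc, ← Real.rpow_add hhalf,
              show b + ((N:ℝ)+a) = γ from by rw [hγab]; ring]
          rw [h1, show ρ/2 = ρ * 2⁻¹ from by ring, Real.mul_rpow hρ.le (by norm_num), hk1_def]
          ring
  -- Region 2 bound
  have hI2 : ∫⁻ y in ball (0 : EuclideanSpace ℝ (Fin N)) (2*ρ) \ ball x (ρ/2), g y
      ≤ T * ENNReal.ofReal (k2 * ρ ^ γ) := by
    have step1 : ∫⁻ y in ball (0 : EuclideanSpace ℝ (Fin N)) (2*ρ) \ ball x (ρ/2), g y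
        ≤ ∫⁻ y in ball (0 : EuclideanSpace ℝ (Fin N)) (2*ρ) \ ball x (ρ/2),
            ENNReal.ofReal ((ρ/2) ^ a) * ENNReal.ofReal (‖y‖ ^ b) := by
      refine setLIntegral_mono' (measurableSet_ball.diff measurableSet_ball) fun y hy => ?_
      have hxy : ρ/2 ≤ ‖x - y‖ := by
        have h1 : ¬ dist y x < ρ/2 := fun h => hy.2 (mem_ball.mpr h)
        rw [show ‖x - y‖ = dist y x from by rw [dist_eq_norm, norm_sub_rev]]
        linarith [not_lt.mp h1]
      have ha' : ‖x - y‖ ^ a ≤ (ρ/2) ^ a := Real.rpow_le_rpow_of_nonpos hhalf hxy ha0.le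
      simp only [hg_def]
      rw [← ENNReal.ofReal_mul (Real.rpow_nonneg hhalf.le _)]
      exact ENNReal.ofReal_le_ofReal
        (mul_le_mul_of_nonneg_right ha' (Real.rpow_nonneg (norm_nonneg _) _))
    have step3 : ∫⁻ y in ball (0 : EuclideanSpace ℝ (Fin N)) (2*ρ), ENNReal.ofReal (‖y‖ ^ b)
        = T * ENNReal.ofReal ((2*ρ) ^ ((N:ℝ) + b) / ((N:ℝ) + b)) := by
      have h := AuxStmt9.lintegral_ball (E := EuclideanSpace ℝ (Fin N)) volume
        (r := 2*ρ) (s := b) h2ρ (by rw [hfin]; exact hbN) hb0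
      rwa [hfin] at h
    have hρc : ρ ^ a * ρ ^ ((N:ℝ) + b) = ρ ^ γ := by
      rw [← Real.rpow_add hρ, show a + ((N:ℝ) + b) = γ from by rw [hγab]; ring]
    calc ∫⁻ y in ball (0 : EuclideanSpace ℝ (Fin N)) (2*ρ) \ ball x (ρ/2), g y
        ≤ ∫⁻ y in ball (0 : EuclideanSpace ℝ (Fin N)) (2*ρ) \ ball x (ρ/2),
            ENNReal.ofReal ((ρ/2) ^ a) * ENNReal.ofReal (‖y‖ ^ b) := step1
      _ ≤ ∫⁻ y in ball (0 : EuclideanSpace ℝ (Fin N)) (2*ρ),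
            ENNReal.ofReal ((ρ/2) ^ a) * ENNReal.ofReal (‖y‖ ^ b) :=
          lintegral_mono_set diff_subset
      _ = ENNReal.ofReal ((ρ/2) ^ a)
            * ∫⁻ y in ball (0 : EuclideanSpace ℝ (Fin N)) (2*ρ), ENNReal.ofReal (‖y‖ ^ b) :=
          lintegral_const_mul' _ _ ENNReal.ofReal_ne_top
      _ = ENNReal.ofReal ((ρ/2) ^ a)
            * (T * ENNReal.ofReal ((2*ρ) ^ ((N:ℝ) + b) / ((N:ℝ) + b))) := by rw [step3]
      _ = T * ENNReal.ofReal (k2 * ρ ^ γ) := by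
          rw [mul_left_comm, ← ENNReal.ofReal_mul (Real.rpow_nonneg hhalf.le _)]
          congr 2
          rw [show ρ/2 = ρ * 2⁻¹ from by ring, Real.mul_rpow hρ.le (by norm_num),
            Real.mul_rpow (by norm_num : (0:ℝ) ≤ 2) hρ.le, hk2_def]
          rw [show ρ ^ a * 2⁻¹ ^ a * ((2:ℝ) ^ ((N:ℝ) + b) * ρ ^ ((N:ℝ) + b) / ((N:ℝ) + b))
              = (2:ℝ)⁻¹ ^ a * ((2:ℝ) ^ ((N:ℝ) + b) / ((N:ℝ) + b)) * (ρ ^ a * ρ ^ ((N:ℝ) + b))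
            from by ring, hρc]
  -- Region 3 bound
  have hI3 : ∫⁻ y in (ball (0 : EuclideanSpace ℝ (Fin N)) (2*ρ))ᶜ, g y
      ≤ T * ENNReal.ofReal (k3 * ρ ^ γ) := by
    have step1 : ∫⁻ y in (ball (0 : EuclideanSpace ℝ (Fin N)) (2*ρ))ᶜ, g y
        ≤ ∫⁻ y in (ball (0 : EuclideanSpace ℝ (Fin N)) (2*ρ))ᶜ,
            ENNReal.ofReal ((2:ℝ)⁻¹ ^ a) * ENNReal.ofReal (‖y‖ ^ (a + b)) := by
      refine setLIntegral_mono' measurableSet_ball.compl fun y hy => ?_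
      have h2y : 2*ρ ≤ ‖y‖ := not_lt.mp (fun h => hy (mem_ball_zero_iff.mpr h))
      have hy0 : 0 < ‖y‖ := lt_of_lt_of_le h2ρ h2y
      have hyhalf : 0 < ‖y‖/2 := by linarith
      have hxy : ‖y‖/2 ≤ ‖x - y‖ := by
        have h1 : ‖y‖ - ‖x‖ ≤ ‖y - x‖ := norm_sub_norm_le y x
        rw [norm_sub_rev, ← hρ_def] at h1
        linarith
      have ha' : ‖x - y‖ ^ a ≤ (‖y‖/2) ^ a := Real.rpow_le_rpow_of_nonpos hyhalf hxy ha0.le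
      have heq : (‖y‖/2) ^ a * ‖y‖ ^ b = (2:ℝ)⁻¹ ^ a * ‖y‖ ^ (a + b) := by
        rw [show ‖y‖/2 = ‖y‖ * 2⁻¹ from by ring,
          Real.mul_rpow (norm_nonneg y) (by norm_num), Real.rpow_add hy0]
        ring
      simp only [hg_def]
      rw [← ENNReal.ofReal_mul (Real.rpow_nonneg (by norm_num) _), ← heq]
      exact ENNReal.ofReal_le_ofReal
        (mul_le_mul_of_nonneg_right ha' (Real.rpow_nonneg (norm_nonneg _) _))
    have step3 : ∫⁻ y in (ball (0 : EuclideanSpace ℝ (Fin N)) (2*ρ))ᶜ,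
          ENNReal.ofReal (‖y‖ ^ (a + b))
        = T * ENNReal.ofReal ((2*ρ) ^ ((N:ℝ) + (a + b)) / (-((N:ℝ) + (a + b)))) := by
      have h := AuxStmt9.lintegral_compl_ball (E := EuclideanSpace ℝ (Fin N)) volume
        (r := 2*ρ) (s := a + b) h2ρ (by rw [hfin]; exact hab)
      rwa [hfin] at h
    calc ∫⁻ y in (ball (0 : EuclideanSpace ℝ (Fin N)) (2*ρ))ᶜ, g y
        ≤ ∫⁻ y in (ball (0 : EuclideanSpace ℝ (Fin N)) (2*ρ))ᶜ,
            ENNReal.ofReal ((2:ℝ)⁻¹ ^ a) * ENNReal.ofReal (‖y‖ ^ (a + b)) := step1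
      _ = ENNReal.ofReal ((2:ℝ)⁻¹ ^ a)
            * ∫⁻ y in (ball (0 : EuclideanSpace ℝ (Fin N)) (2*ρ))ᶜ,
                ENNReal.ofReal (‖y‖ ^ (a + b)) :=
          lintegral_const_mul' _ _ ENNReal.ofReal_ne_top
      _ = ENNReal.ofReal ((2:ℝ)⁻¹ ^ a)
            * (T * ENNReal.ofReal ((2*ρ) ^ ((N:ℝ) + (a + b)) / (-((N:ℝ) + (a + b))))) := by
          rw [step3]
      _ = T * ENNReal.ofReal (k3 * ρ ^ γ) := by
          rw [mul_left_comm, ← ENNReal.ofReal_mul (Real.rpow_nonneg (by norm_num) _)]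
          congr 2
          rw [← hγab, Real.mul_rpow (by norm_num : (0:ℝ) ≤ 2) hρ.le, hk3_def]
          ring
  have hsub : Ω ⊆ ball x (ρ/2) ∪ (ball (0 : EuclideanSpace ℝ (Fin N)) (2*ρ) \ ball x (ρ/2)
      ∪ (ball (0 : EuclideanSpace ℝ (Fin N)) (2*ρ))ᶜ) := by
    intro y _
    by_cases h1 : y ∈ ball x (ρ/2)
    · exact Or.inl h1
    · by_cases h2 : y ∈ ball (0 : EuclideanSpace ℝ (Fin N)) (2*ρ)
      · exact Or.inr (Or.inl ⟨h2, h1⟩)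
      · exact Or.inr (Or.inr h2)
  have key : ∫⁻ y in Ω, g y ≤ T * ENNReal.ofReal ((k1 + k2 + k3) * ρ ^ γ) := by
    have hργ : 0 ≤ ρ ^ γ := Real.rpow_nonneg hρ.le _
    calc ∫⁻ y in Ω, g y
        ≤ ∫⁻ y in ball x (ρ/2) ∪ (ball (0 : EuclideanSpace ℝ (Fin N)) (2*ρ) \ ball x (ρ/2)
            ∪ (ball (0 : EuclideanSpace ℝ (Fin N)) (2*ρ))ᶜ), g y := lintegral_mono_set hsub
      _ ≤ (∫⁻ y in ball x (ρ/2), g y)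
            + ((∫⁻ y in ball (0 : EuclideanSpace ℝ (Fin N)) (2*ρ) \ ball x (ρ/2), g y)
              + ∫⁻ y in (ball (0 : EuclideanSpace ℝ (Fin N)) (2*ρ))ᶜ, g y) :=
          le_trans (lintegral_union_le _ _ _) (add_le_add_right (lintegral_union_le _ _ _) _)
      _ ≤ T * ENNReal.ofReal (k1 * ρ ^ γ) + (T * ENNReal.ofReal (k2 * ρ ^ γ)
            + T * ENNReal.ofReal (k3 * ρ ^ γ)) := add_le_add hI1 (add_le_add hI2 hI3)
      _ = T * ENNReal.ofReal ((k1 + k2 + k3) * ρ ^ γ) := by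
          rw [← mul_add, ← mul_add,
            ← ENNReal.ofReal_add (mul_nonneg hk2 hργ) (mul_nonneg hk3 hργ),
            ← ENNReal.ofReal_add (mul_nonneg hk1 hργ)
              (add_nonneg (mul_nonneg hk2 hργ) (mul_nonneg hk3 hργ))]
          congr 1
          ring
  have hργ : 0 ≤ ρ ^ γ := Real.rpow_nonneg hρ.le _
  calc (∫⁻ y in Ω, g y).toReal
      ≤ (T * ENNReal.ofReal ((k1 + k2 + k3) * ρ ^ γ)).toReal :=
        ENNReal.toReal_mono (ENNReal.mul_ne_top hTne ENNReal.ofReal_ne_top) key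
    _ = T.toReal * ((k1 + k2 + k3) * ρ ^ γ) := by
        rw [ENNReal.toReal_mul, ENNReal.toReal_ofReal
          (mul_nonneg (by linarith) hργ)]
    _ ≤ (T.toReal * (k1 + k2 + k3) + 1) * ρ ^ γ := by nlinarith [ENNReal.toReal_nonneg (a := T)]
end AuxStmt9
end
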